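/- arXiv:2603.23196 — 6 statements merged into one kernel-verified Lean document; each statement's English description precedes it below -/
import Mathlib

section
/- Let h₁, …, h_m : K → ℝ be continuous functions on a compact metric space K, and let π be a Borel probability measure on K. Then there exists a discrete probability measure π̃ on K supported on at most m+1 points such that ∫ h_j dπ = ∫ h_j dπ̃ for all 1 ≤ j ≤ m. -/
open MeasureTheory

private lemma sum_extend_aux {ι κ M : Type*} [Fintype ι] [Fintype κ] [AddCommMonoid M]
    (f : ι ↪ κ) (w : ι → M) : ∑ i, Function.extend f w 0 i = ∑ j, w j := by
  classical
  rw [show (∑ j, w j) = ∑ j, Function.extend f w 0 (f j) from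
    Finset.sum_congr rfl fun j _ => (f.injective.extend_apply w 0 j).symm]
  rw [← Finset.sum_map Finset.univ f]
  refine (Finset.sum_subset (Finset.subset_univ _) ?_).symm
  intro i _ hi
  rw [Function.extend_apply' _ _ _ (by simpa using hi)]
  rfl

/-- Moment matching with a discrete measure: given continuous functions `h₁,…,h_m` on a
compact metric space `K` and a Borel probability measure `π` on `K`, there is a discrete
probability measure with at most `m + 1` atoms matching all the integrals `∫ h_j dπ`. -/
theorem exists_discrete_moment_match {K : Type*} [MetricSpace K] [CompactSpace K]
    [MeasurableSpace K] [BorelSpace K]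
    (m : ℕ) (h : Fin m → K → ℝ) (hc : ∀ j, Continuous (h j))
    (π : Measure K) [IsProbabilityMeasure π] :
    ∃ (p : Fin (m + 1) → ℝ) (x : Fin (m + 1) → K),
      (∀ i, 0 ≤ p i) ∧ (∑ i, p i = 1) ∧
      ∀ j, ∫ y, h j y ∂π = ∑ i, p i * h j (x i) := by
  classical
  -- K is nonempty
  have hK : Nonempty K := by
    by_contra hempty
    rw [not_nonempty_iff] at hempty
    have : π Set.univ = 1 := measure_univ
    simp [Set.univ_eq_empty_iff.mpr hempty] at this
  obtain ⟨k₀⟩ := hK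
  -- the vector-valued map
  set F : K → (Fin m → ℝ) := fun y j => h j y with hF
  have hFc : Continuous F := continuous_pi fun j => hc j
  have hFi : Integrable F π := hFc.integrable_of_hasCompactSupport
    (HasCompactSupport.of_compactSpace F)
  set s : Set (Fin m → ℝ) := Set.range F with hs
  have hsc : IsCompact s := isCompact_range hFc
  have hs0 : F k₀ ∈ s := ⟨k₀, rfl⟩
  -- the set of (m+1)-point convex combinations of points of s
  set g : (Fin (m + 1) → ℝ) × (Fin (m + 1) → Fin m → ℝ) → (Fin m → ℝ) :=
    fun q => ∑ i, q.1 i • q.2 i with hg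
  have hgc : Continuous g := by
    apply continuous_finset_sum
    intro i _
    exact ((continuous_apply i).comp continuous_fst).smul
      ((continuous_apply i).comp continuous_snd)
  set A : Set ((Fin (m + 1) → ℝ) × (Fin (m + 1) → Fin m → ℝ)) :=
    (stdSimplex ℝ (Fin (m + 1))) ×ˢ (Set.univ.pi fun _ => s) with hA
  have hAc : IsCompact A :=
    (isCompact_stdSimplex _ _).prod (isCompact_univ_pi fun _ => hsc)
  set C : Set (Fin m → ℝ) := g '' A with hC
  have hCc : IsCompact C := hAc.image hgc
  -- C equals the convex hull of s
  have hC1 : C ⊆ convexHull ℝ s := by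
    rintro _ ⟨⟨p, z⟩, ⟨⟨hp0, hp1⟩, hz⟩, rfl⟩
    exact (convex_convexHull ℝ s).sum_mem (fun i _ => hp0 i) hp1
      fun i _ => subset_convexHull ℝ s (hz i (Set.mem_univ i))
  have hC2 : convexHull ℝ s ⊆ C := by
    intro x hx
    obtain ⟨ι, hι, z, w, hzs, hai, hw0, hw1, hwz⟩ :=
      eq_pos_convex_span_of_mem_convexHull hx
    have hcard : Fintype.card ι ≤ m + 1 := by
      have h1 := hai.card_le_finrank_succ
      have h2 : Module.finrank ℝ (vectorSpan ℝ (Set.range z)) ≤ m := by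
        simpa using (vectorSpan ℝ (Set.range z)).finrank_le
      omega
    obtain ⟨f⟩ : Nonempty (ι ↪ Fin (m + 1)) := by
      rw [Function.Embedding.nonempty_iff_card_le]
      simpa using hcard
    refine ⟨(Function.extend f w 0, Function.extend f z fun _ => F k₀), ⟨⟨?_, ?_⟩, ?_⟩, ?_⟩
    · intro i
      dsimp only
      rcases em (∃ j, f j = i) with ⟨j, rfl⟩ | hni
      · rw [f.injective.extend_apply]; exact (hw0 j).le
      · rw [Function.extend_apply' _ _ _ hni]; rfl
    · rw [sum_extend_aux, hw1]
    · intro i _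
      dsimp only
      rcases em (∃ j, f j = i) with ⟨j, rfl⟩ | hni
      · rw [f.injective.extend_apply]; exact hzs ⟨j, rfl⟩
      · rw [Function.extend_apply' _ _ _ hni]; exact hs0
    · show (∑ i, Function.extend f w 0 i • Function.extend f z (fun _ => F k₀) i) = x
      rw [← hwz, ← sum_extend_aux f fun j => w j • z j]
      refine Finset.sum_congr rfl fun i _ => ?_
      rcases em (∃ j, f j = i) with ⟨j, rfl⟩ | hni
      · rw [f.injective.extend_apply, f.injective.extend_apply, f.injective.extend_apply]
      · rw [Function.extend_apply' _ _ _ hni, Function.extend_apply' _ _ _ hni,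
          Function.extend_apply' _ _ _ hni]
        simp
  have hCeq : C = convexHull ℝ s := le_antisymm hC1 hC2
  -- the integral of F lies in C
  have hmem : (∫ y, F y ∂π) ∈ C := by
    rw [hCeq]
    exact (convex_convexHull ℝ s).integral_mem (hCeq ▸ hCc.isClosed)
      (Filter.Eventually.of_forall fun y => subset_convexHull ℝ s ⟨y, rfl⟩) hFi
  obtain ⟨⟨p, z⟩, ⟨⟨hp0, hp1⟩, hz⟩, hpz⟩ := hmem
  -- choose preimages in K
  have hz' : ∀ i, ∃ y : K, F y = z i := fun i => hz i (Set.mem_univ i)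
  choose y hy using hz'
  refine ⟨p, y, hp0, hp1, fun j => ?_⟩
  have hint : (∫ y, F y ∂π) j = ∫ y, h j y ∂π := by
    have := (ContinuousLinearMap.proj (R := ℝ) (φ := fun _ : Fin m => ℝ) j).integral_comp_comm hFi
    simpa [hF] using this.symm
  rw [← hint, ← hpz]
  simp only [hg, Finset.sum_apply, Pi.smul_apply, smul_eq_mul]
  refine Finset.sum_congr rfl fun i _ => ?_
  rw [← hy i]
end

section
/- Let X₁, …, X_n be data points in ℝ^d, let 𝓜 be the class of Gaussian location mixture densities f_μ(x) = (2π)^{-d/2} ∫ exp(-‖x-θ‖²/2) dμ(θ) over probability measures μ on ℝ^d, and let L̂_n(x₁,…,x_n) = sup_{f∈𝓜} (1/n) Σᵢ log f(xᵢ). Then the function (x₁,…,x_n) ↦ L̂_n(x₁,…,x_n) + (1/(2n)) Σᵢ ‖xᵢ‖² is convex on ℝ^{dn}; in particular L̂_n is differentiable Lebesgue-almost everywhere on ℝ^{dn}. -/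
open MeasureTheory Real

/-- The Gaussian location mixture density with mixing measure `μ` on `ℝ^d`. -/
noncomputable def gaussianMixture {d : ℕ} (μ : Measure (EuclideanSpace ℝ (Fin d)))
    (x : EuclideanSpace ℝ (Fin d)) : ℝ :=
  (2 * π) ^ (-(d : ℝ) / 2) * ∫ θ, Real.exp (-‖x - θ‖ ^ 2 / 2) ∂μ

/-- The optimal NPMLE log-likelihood `L̂ₙ`, as a function of the data `(x₁,…,xₙ)`. -/
noncomputable def optLogLik (d n : ℕ) (x : Fin n → EuclideanSpace ℝ (Fin d)) : ℝ :=
  ⨆ μ : ProbabilityMeasure (EuclideanSpace ℝ (Fin d)),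
    (1 / n : ℝ) * ∑ i, Real.log (gaussianMixture (μ : Measure _) (x i))

section Rademacher

variable {E F : Type*} [NormedAddCommGroup E] [NormedSpace ℝ E] [FiniteDimensional ℝ E]
  [MeasurableSpace E] [BorelSpace E]
  [NormedAddCommGroup F] [NormedSpace ℝ F] [FiniteDimensional ℝ F]

/-- Rademacher's theorem for locally Lipschitz functions. -/
theorem LocallyLipschitz.ae_differentiableAt' (μ : Measure E) [μ.IsAddHaarMeasure]
    {f : E → F} (hf : LocallyLipschitz f) : ∀ᵐ x ∂μ, DifferentiableAt ℝ f x := by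
  have H : ∀ x : E, ∃ (K : NNReal) (U : Set E), IsOpen U ∧ x ∈ U ∧ LipschitzOnWith K f U := by
    intro x
    obtain ⟨K, t, ht, hK⟩ := hf x
    exact ⟨K, interior t, isOpen_interior, mem_interior_iff_mem_nhds.2 ht,
      hK.mono interior_subset⟩
  choose K U hUo hxU hfU using H
  obtain ⟨s, hsc, hsU⟩ := TopologicalSpace.isOpen_iUnion_countable U hUo
  have hcover : (⋃ x ∈ s, U x) = Set.univ := by
    rw [hsU]
    exact Set.eq_univ_of_forall fun y => Set.mem_iUnion.2 ⟨y, hxU y⟩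
  have hae : ∀ᵐ y ∂μ, ∀ x ∈ s, y ∈ U x → DifferentiableWithinAt ℝ f (U x) y := by
    rw [MeasureTheory.ae_ball_iff hsc]
    intro x _
    exact (hfU x).ae_differentiableWithinAt_of_mem
  filter_upwards [hae] with y hy
  have : y ∈ ⋃ x ∈ s, U x := hcover ▸ Set.mem_univ y
  obtain ⟨x, hx, hyx⟩ := Set.mem_iUnion₂.1 this
  exact (hy x hx hyx).differentiableAt ((hUo x).mem_nhds hyx)

end Rademacher

section Jsec

variable {d : ℕ}

/-- The moment-generating-type integral `∫ exp(⟨v,θ⟩ - ‖θ‖²/2) dμ(θ)`. -/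
noncomputable def Jfun (μ : Measure (EuclideanSpace ℝ (Fin d)))
    (v : EuclideanSpace ℝ (Fin d)) : ℝ :=
  ∫ θ, Real.exp ((inner ℝ v θ : ℝ) - ‖θ‖ ^ 2 / 2) ∂μ

lemma exponent_le (v θ : EuclideanSpace ℝ (Fin d)) :
    (inner ℝ v θ : ℝ) - ‖θ‖ ^ 2 / 2 ≤ ‖v‖ ^ 2 / 2 := by
  have h1 : (inner ℝ v θ : ℝ) ≤ ‖v‖ * ‖θ‖ := real_inner_le_norm v θ
  nlinarith [sq_nonneg (‖v‖ - ‖θ‖)]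

lemma cont_integrand (v : EuclideanSpace ℝ (Fin d)) :
    Continuous fun θ : EuclideanSpace ℝ (Fin d) =>
      Real.exp ((inner ℝ v θ : ℝ) - ‖θ‖ ^ 2 / 2) :=
  Real.continuous_exp.comp <| ((continuous_const.inner continuous_id).sub
    ((continuous_norm.pow 2).div_const 2))

variable (μ : Measure (EuclideanSpace ℝ (Fin d))) [IsProbabilityMeasure μ]

lemma integrable_exp_inner (v : EuclideanSpace ℝ (Fin d)) :
    Integrable (fun θ => Real.exp ((inner ℝ v θ : ℝ) - ‖θ‖ ^ 2 / 2)) μ :=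
  Integrable.mono' (integrable_const (Real.exp (‖v‖ ^ 2 / 2)))
    (cont_integrand v).aestronglyMeasurable
    (ae_of_all _ fun θ => by
      rw [Real.norm_of_nonneg (Real.exp_pos _).le]
      exact Real.exp_le_exp.2 (exponent_le v θ))

lemma Jfun_pos (v : EuclideanSpace ℝ (Fin d)) : 0 < Jfun μ v := by
  rw [Jfun]
  rw [integral_pos_iff_support_of_nonneg (fun θ => (Real.exp_pos _).le)
    (integrable_exp_inner μ v)]
  have : (Function.support fun θ : EuclideanSpace ℝ (Fin d) =>
      Real.exp ((inner ℝ v θ : ℝ) - ‖θ‖ ^ 2 / 2)) = Set.univ := by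
    ext θ; simp [Function.mem_support, Real.exp_ne_zero]
  rw [this, measure_univ]
  norm_num

lemma memLp_exp_smul (v : EuclideanSpace ℝ (Fin d)) (a : ℝ) (ha : 0 ≤ a) (p : ENNReal) :
    MemLp (fun θ => Real.exp (a * ((inner ℝ v θ : ℝ) - ‖θ‖ ^ 2 / 2))) p μ := by
  refine MemLp.of_bound ?_ (Real.exp (a * (‖v‖ ^ 2 / 2))) (ae_of_all _ fun θ => ?_)
  · exact (Real.continuous_exp.comp (continuous_const.mul
      ((continuous_const.inner continuous_id).sub
        ((continuous_norm.pow 2).div_const 2)))).aestronglyMeasurable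
  · rw [Real.norm_of_nonneg (Real.exp_pos _).le]
    exact Real.exp_le_exp.2 (mul_le_mul_of_nonneg_left (exponent_le v θ) ha)

/-- The log of `Jfun μ` is convex in `v` (a Hölder-inequality argument). -/
lemma convexOn_log_Jfun : ConvexOn ℝ Set.univ fun v => Real.log (Jfun μ v) := by
  refine ⟨convex_univ, fun x _ y _ a b ha hb hab => ?_⟩
  rcases eq_or_lt_of_le ha with rfl | ha'
  · have hb1 : b = 1 := by linarith
    subst hb1; simp
  rcases eq_or_lt_of_le hb with rfl | hb'
  · have ha1 : a = 1 := by linarith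
    subst ha1; simp
  have ha1 : a < 1 := by linarith
  have hb1 : b < 1 := by linarith
  have hpq : Real.HolderConjugate a⁻¹ b⁻¹ :=
    ⟨by rw [inv_inv, inv_inv, inv_one]; exact hab, inv_pos.2 ha', inv_pos.2 hb'⟩
  set F := fun θ : EuclideanSpace ℝ (Fin d) =>
    Real.exp (a * ((inner ℝ x θ : ℝ) - ‖θ‖ ^ 2 / 2)) with hF
  set G := fun θ : EuclideanSpace ℝ (Fin d) =>
    Real.exp (b * ((inner ℝ y θ : ℝ) - ‖θ‖ ^ 2 / 2)) with hG
  have key := integral_mul_le_Lp_mul_Lq_of_nonneg (μ := μ) hpq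
    (ae_of_all _ fun θ => (Real.exp_pos _).le) (ae_of_all _ fun θ => (Real.exp_pos _).le)
    (memLp_exp_smul μ x a ha (ENNReal.ofReal a⁻¹))
    (memLp_exp_smul μ y b hb (ENNReal.ofReal b⁻¹))
  have eFG : ∀ θ : EuclideanSpace ℝ (Fin d), F θ * G θ =
      Real.exp ((inner ℝ (a • x + b • y) θ : ℝ) - ‖θ‖ ^ 2 / 2) := by
    intro θ
    rw [hF, hG, ← Real.exp_add]
    congr 1
    rw [inner_add_left, real_inner_smul_left, real_inner_smul_left]
    ring_nf
    nlinarith [hab]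
  have eF : ∀ θ : EuclideanSpace ℝ (Fin d), F θ ^ a⁻¹ =
      Real.exp ((inner ℝ x θ : ℝ) - ‖θ‖ ^ 2 / 2) := by
    intro θ
    rw [hF, ← Real.exp_mul, mul_comm a, mul_assoc, mul_inv_cancel₀ ha'.ne', mul_one]
  have eG : ∀ θ : EuclideanSpace ℝ (Fin d), G θ ^ b⁻¹ =
      Real.exp ((inner ℝ y θ : ℝ) - ‖θ‖ ^ 2 / 2) := by
    intro θ
    rw [hG, ← Real.exp_mul, mul_comm b, mul_assoc, mul_inv_cancel₀ hb'.ne', mul_one]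
  change ∫ θ, F θ * G θ ∂μ ≤ (∫ θ, F θ ^ a⁻¹ ∂μ) ^ (1 / a⁻¹) * (∫ θ, G θ ^ b⁻¹ ∂μ) ^ (1 / b⁻¹) at key
  simp only [eFG, eF, eG, one_div, inv_inv] at key
  have key2 : Jfun μ (a • x + b • y) ≤ Jfun μ x ^ a * Jfun μ y ^ b := by
    rw [Jfun, Jfun, Jfun]; exact key
  calc Real.log (Jfun μ (a • x + b • y)) ≤ Real.log (Jfun μ x ^ a * Jfun μ y ^ b) :=
        Real.log_le_log (Jfun_pos μ _) key2
    _ = a * Real.log (Jfun μ x) + b * Real.log (Jfun μ y) := by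
        rw [Real.log_mul (Real.rpow_pos_of_pos (Jfun_pos μ x) a).ne'
          (Real.rpow_pos_of_pos (Jfun_pos μ y) b).ne',
          Real.log_rpow (Jfun_pos μ x), Real.log_rpow (Jfun_pos μ y)]
    _ = a • Real.log (Jfun μ x) + b • Real.log (Jfun μ y) := by simp [smul_eq_mul]

lemma two_pi_rpow_pos : (0 : ℝ) < (2 * π) ^ (-(d : ℝ) / 2) :=
  Real.rpow_pos_of_pos (by positivity) _

lemma gm_eq (v : EuclideanSpace ℝ (Fin d)) :
    gaussianMixture μ v =
      (2 * π) ^ (-(d : ℝ) / 2) * (Real.exp (-‖v‖ ^ 2 / 2) * Jfun μ v) := by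
  have hpt : ∀ θ : EuclideanSpace ℝ (Fin d), Real.exp (-‖v - θ‖ ^ 2 / 2) =
      Real.exp (-‖v‖ ^ 2 / 2) * Real.exp ((inner ℝ v θ : ℝ) - ‖θ‖ ^ 2 / 2) := by
    intro θ
    rw [← Real.exp_add]
    congr 1
    have h := norm_sub_sq_real v θ
    nlinarith [h]
  rw [gaussianMixture, Jfun]
  simp only [hpt]
  rw [integral_const_mul]

lemma gm_pos (v : EuclideanSpace ℝ (Fin d)) : 0 < gaussianMixture μ v := by
  rw [gm_eq μ v]
  exact mul_pos two_pi_rpow_pos (mul_pos (Real.exp_pos _) (Jfun_pos μ v))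

lemma integrable_exp_gauss (v : EuclideanSpace ℝ (Fin d)) :
    Integrable (fun θ => Real.exp (-‖v - θ‖ ^ 2 / 2)) μ :=
  Integrable.mono' (integrable_const 1)
    ((Real.continuous_exp.comp (((continuous_const.sub continuous_id).norm.pow 2).neg.div_const
      2))).aestronglyMeasurable
    (ae_of_all _ fun θ => by
      rw [Real.norm_of_nonneg (Real.exp_pos _).le]
      exact Real.exp_le_one_iff.2 (by nlinarith [sq_nonneg ‖v - θ‖]))

lemma gm_le (v : EuclideanSpace ℝ (Fin d)) :
    gaussianMixture μ v ≤ (2 * π) ^ (-(d : ℝ) / 2) := by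
  rw [gaussianMixture]
  nth_rewrite 2 [show ((2 * π) ^ (-(d : ℝ) / 2) : ℝ) = (2 * π) ^ (-(d : ℝ) / 2) * 1 by ring]
  refine mul_le_mul_of_nonneg_left ?_ two_pi_rpow_pos.le
  calc ∫ θ, Real.exp (-‖v - θ‖ ^ 2 / 2) ∂μ ≤ ∫ _θ, (1 : ℝ) ∂μ := by
        refine integral_mono (integrable_exp_gauss μ v) (integrable_const 1) fun θ => ?_
        exact Real.exp_le_one_iff.2 (by nlinarith [sq_nonneg ‖v - θ‖])
    _ = 1 := by simp

lemma log_gm (v : EuclideanSpace ℝ (Fin d)) :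
    Real.log (gaussianMixture μ v) + ‖v‖ ^ 2 / 2 =
      Real.log ((2 * π) ^ (-(d : ℝ) / 2)) + Real.log (Jfun μ v) := by
  rw [gm_eq μ v, Real.log_mul two_pi_rpow_pos.ne'
    (mul_pos (Real.exp_pos _) (Jfun_pos μ v)).ne',
    Real.log_mul (Real.exp_pos _).ne' (Jfun_pos μ v).ne', Real.log_exp]
  ring

end Jsec

/-- The function `(x₁,…,xₙ) ↦ L̂ₙ(x₁,…,xₙ) + (1/(2n)) ∑ᵢ ‖xᵢ‖²` is convex on `ℝ^{dn}`;
in particular `L̂ₙ` is differentiable Lebesgue-almost everywhere. -/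
theorem convexOn_optLogLik_add_sq (d n : ℕ) (hn : 0 < n) :
    ConvexOn ℝ Set.univ
      (fun x : Fin n → EuclideanSpace ℝ (Fin d) =>
        optLogLik d n x + (1 / (2 * n) : ℝ) * ∑ i, ‖x i‖ ^ 2)
    ∧ ∀ᵐ x : Fin n → EuclideanSpace ℝ (Fin d),
        DifferentiableAt ℝ (optLogLik d n) x := by
  classical
  haveI : Nonempty (ProbabilityMeasure (EuclideanSpace ℝ (Fin d))) :=
    ⟨⟨Measure.dirac 0, by infer_instance⟩⟩
  set c : ℝ := (2 * π) ^ (-(d : ℝ) / 2) with hc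
  set A : ProbabilityMeasure (EuclideanSpace ℝ (Fin d)) →
      (Fin n → EuclideanSpace ℝ (Fin d)) → ℝ :=
    fun μ x => (1 / n : ℝ) * ∑ i, Real.log (gaussianMixture (μ : Measure _) (x i)) with hA
  set q : (Fin n → EuclideanSpace ℝ (Fin d)) → ℝ :=
    fun x => (1 / (2 * n) : ℝ) * ∑ i, ‖x i‖ ^ 2 with hq
  have hbound : ∀ x μ, A μ x ≤ (1 / n : ℝ) * ∑ _i : Fin n, Real.log c := by
    intro x μ
    haveI : IsProbabilityMeasure (μ : Measure (EuclideanSpace ℝ (Fin d))) := μ.2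
    refine mul_le_mul_of_nonneg_left (Finset.sum_le_sum fun i _ => ?_) (by positivity)
    exact Real.log_le_log (gm_pos _ _) (gm_le _ _)
  have hbdd : ∀ x, BddAbove (Set.range fun μ => A μ x) := fun x =>
    ⟨_, Set.forall_mem_range.2 fun μ => hbound x μ⟩
  have hsum : ∀ x : Fin n → EuclideanSpace ℝ (Fin d),
      optLogLik d n x + q x = ⨆ μ : ProbabilityMeasure (EuclideanSpace ℝ (Fin d)),
        (A μ x + q x) := by
    intro x
    rw [optLogLik]
    exact Monotone.map_ciSup_of_continuousAt (f := fun r : ℝ => r + q x)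
      (continuous_add_right (q x)).continuousAt (fun _ _ h => add_le_add_left h _) (hbdd x)
  -- convexity of each `A μ + q`
  have hΦ : ∀ μ : ProbabilityMeasure (EuclideanSpace ℝ (Fin d)),
      ConvexOn ℝ Set.univ fun x => A μ x + q x := by
    intro μ
    haveI : IsProbabilityMeasure (μ : Measure (EuclideanSpace ℝ (Fin d))) := μ.2
    have rearr : ∀ x : Fin n → EuclideanSpace ℝ (Fin d),
        A μ x + q x = (1 / n : ℝ) *
          ∑ i, (Real.log c + Real.log (Jfun (μ : Measure _) (x i))) := by
      intro x
      have hpt : ∀ i : Fin n, Real.log c + Real.log (Jfun (μ : Measure _) (x i)) =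
          Real.log (gaussianMixture (μ : Measure _) (x i)) + ‖x i‖ ^ 2 / 2 :=
        fun i => (log_gm _ _).symm
      simp only [hA, hq, hpt]
      rw [Finset.sum_add_distrib]
      have hsum2 : (∑ i : Fin n, ‖x i‖ ^ 2 / 2) = (∑ i : Fin n, ‖x i‖ ^ 2) / 2 :=
        (Finset.sum_div _ _ _).symm
      rw [hsum2]
      have hn' : (n : ℝ) ≠ 0 := Nat.cast_ne_zero.2 hn.ne'
      field_simp
    refine ⟨convex_univ, fun x _ y _ a b ha hb hab => ?_⟩
    simp only [smul_eq_mul]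
    rw [rearr, rearr, rearr]
    have hkey : ∀ i : Fin n,
        Real.log c + Real.log (Jfun (μ : Measure _) ((a • x + b • y) i)) ≤
          a * (Real.log c + Real.log (Jfun (μ : Measure _) (x i))) +
            b * (Real.log c + Real.log (Jfun (μ : Measure _) (y i))) := by
      intro i
      have h2 := (convexOn_log_Jfun (μ : Measure _)).2 (Set.mem_univ (x i))
        (Set.mem_univ (y i)) ha hb hab
      simp only [smul_eq_mul] at h2
      have hi : (a • x + b • y) i = a • x i + b • y i := by simp
      rw [hi]
      have hcc : a * Real.log c + b * Real.log c = Real.log c := by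
        rw [← add_mul, hab, one_mul]
      have h2' : Real.log (Jfun (μ : Measure _) (a • x i + b • y i)) ≤
          a • Real.log (Jfun (μ : Measure _) (x i)) +
            b • Real.log (Jfun (μ : Measure _) (y i)) := h2
      simp only [smul_eq_mul] at h2'
      linarith
    calc (1 / n : ℝ) * ∑ i, (Real.log c + Real.log (Jfun (μ : Measure _) ((a • x + b • y) i)))
        ≤ (1 / n : ℝ) * ∑ i, (a * (Real.log c + Real.log (Jfun (μ : Measure _) (x i))) +
            b * (Real.log c + Real.log (Jfun (μ : Measure _) (y i)))) :=
          mul_le_mul_of_nonneg_left (Finset.sum_le_sum fun i _ => hkey i) (by positivity)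
      _ = a * ((1 / n : ℝ) * ∑ i, (Real.log c + Real.log (Jfun (μ : Measure _) (x i)))) +
            b * ((1 / n : ℝ) * ∑ i, (Real.log c + Real.log (Jfun (μ : Measure _) (y i)))) := by
          rw [Finset.sum_add_distrib, ← Finset.mul_sum, ← Finset.mul_sum]
          ring
  have hbdd2 : ∀ x, BddAbove (Set.range fun μ => A μ x + q x) := fun x =>
    ⟨_, Set.forall_mem_range.2 fun μ => add_le_add_left (hbound x μ) (q x)⟩
  have hfun : (fun x => optLogLik d n x + q x) =
      fun x => ⨆ μ : ProbabilityMeasure (EuclideanSpace ℝ (Fin d)), (A μ x + q x) :=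
    funext hsum
  have hconv : ConvexOn ℝ Set.univ fun x => optLogLik d n x + q x := by
    rw [hfun]
    refine ⟨convex_univ, fun x _ y _ a b ha hb hab => ?_⟩
    refine ciSup_le fun μ => ?_
    have h1 := (hΦ μ).2 (Set.mem_univ x) (Set.mem_univ y) ha hb hab
    refine h1.trans ?_
    simp only [smul_eq_mul]
    gcongr
    exacts [le_ciSup (hbdd2 x) μ, le_ciSup (hbdd2 y) μ]
  refine ⟨hconv, ?_⟩
  have hLL : LocallyLipschitz fun x => optLogLik d n x + q x := hconv.locallyLipschitz
  haveI : (volume : Measure (Fin n → EuclideanSpace ℝ (Fin d))).IsAddHaarMeasure :=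
    Measure.pi.isAddHaarMeasure _
  have hae := hLL.ae_differentiableAt'
    (volume : Measure (Fin n → EuclideanSpace ℝ (Fin d)))
  have hq_diff : Differentiable ℝ q := by
    refine Differentiable.const_mul ?_ _
    refine Differentiable.fun_sum fun i _ => ?_
    exact Differentiable.norm_sq (𝕜 := ℝ) (ContinuousLinearMap.proj (R := ℝ)
      (φ := fun _ : Fin n => EuclideanSpace ℝ (Fin d)) i).differentiable
  filter_upwards [hae] with x hx
  have hrepr : optLogLik d n = fun y => (optLogLik d n y + q y) - q y :=
    funext fun y => by ring
  rw [hrepr]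
  exact hx.sub (hq_diff x)
end

section
/- Let μ_* be a probability measure supported in a compact set Θ ⊂ ℝ^d, let f_* be the Gaussian location mixture density with mixing measure μ_*, and let X₁, …, X_n be i.i.d. samples from f_*. Set M = 3√(log n) and Θ_M = {x : dist(x, Θ) ≤ M}. Then E[ ∏ᵢ (1 + n² 𝟙(Xᵢ ∉ Θ_M)) ] ≤ exp(exp(d)). -/
open MeasureTheory Real ProbabilityTheory

lemma integral_prod_indep {Ω E : Type*} [MeasurableSpace Ω] [MeasurableSpace E]
    (P : Measure Ω) [IsProbabilityMeasure P] {n : ℕ}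
    (X : Fin n → Ω → E) (hmeas : ∀ i, Measurable (X i))
    (hindep : iIndepFun X P)
    (g : E → ℝ) (hg : Measurable g) (hg0 : ∀ x, 0 ≤ g x) (s : Finset (Fin n)) :
    ∫ ω, ∏ i ∈ s, g (X i ω) ∂P = ∏ i ∈ s, ∫ ω, g (X i ω) ∂P := by
  classical
  induction s using Finset.induction_on with
  | empty => simp
  | insert i s hi ih =>
    have hcomp : iIndepFun (fun i ω => g (X i ω)) P :=
      hindep.comp _ (fun _ => hg)
    have hIndep : IndepFun (fun ω => g (X i ω)) (fun ω => ∏ j ∈ s, g (X j ω)) P := by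
      have := (hcomp.indepFun_finsetProd_of_notMem (fun j => hg.comp (hmeas j)) hi).symm
      convert this using 2
      simp [Finset.prod_apply]
    have := hIndep.integral_mul_eq_mul_integral
      ((hg.comp (hmeas i)).aestronglyMeasurable)
      ((Finset.measurable_prod s fun j _ => hg.comp (hmeas j)).aestronglyMeasurable)
    simp only [Finset.prod_insert hi]
    rw [show (∫ ω, g (X i ω) * ∏ j ∈ s, g (X j ω) ∂P)
        = ∫ ω, ((fun ω => g (X i ω)) * fun ω => ∏ j ∈ s, g (X j ω)) ω ∂P from rfl,
      this, ih]

lemma gauss_int (d : ℕ) (θ : EuclideanSpace ℝ (Fin d)) :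
    ∫ x : EuclideanSpace ℝ (Fin d), rexp (-(1/6) * ‖x - θ‖^2) = (6*π) ^ ((d:ℝ)/2) := by
  rw [integral_sub_right_eq_self (fun v => rexp (-(1/6) * ‖v‖^2)) θ,
    GaussianFourier.integral_rexp_neg_mul_sq_norm (by norm_num : (0:ℝ) < 1/6),
    finrank_euclideanSpace_fin]
  congr 1
  field_simp

lemma gauss_integrable (d : ℕ) (θ : EuclideanSpace ℝ (Fin d)) :
    Integrable (fun x : EuclideanSpace ℝ (Fin d) => rexp (-(1/6) * ‖x - θ‖^2)) := by
  have h := GaussianFourier.integrable_cexp_neg_mul_sq_norm_add (V := EuclideanSpace ℝ (Fin d))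
    (b := (1/6 : ℂ)) (by norm_num) 0 0
  simp only [zero_mul, add_zero] at h
  have h2 : Integrable (fun v : EuclideanSpace ℝ (Fin d) => rexp (-(1/6) * ‖v‖^2)) := by
    refine h.re.congr (Filter.Eventually.of_forall fun v => ?_)
    have : (-(1/6 : ℂ) * (‖v‖:ℂ)^2) = ((-(1/6) * ‖v‖^2 : ℝ) : ℂ) := by push_cast; ring
    simp only [RCLike.re_to_complex, this, Complex.exp_ofReal_re]
  exact h2.comp_sub_right θ

lemma tail_bound {d : ℕ} (Θ : Set (EuclideanSpace ℝ (Fin d)))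
    (μstar : Measure (EuclideanSpace ℝ (Fin d))) [IsProbabilityMeasure μstar]
    (hsupp : μstar Θᶜ = 0) {M : ℝ} (hM : 0 ≤ M) :
    (volume.withDensity fun x => ENNReal.ofReal (gaussianMixture μstar x))
      {x | M < Metric.infDist x Θ}
      ≤ ENNReal.ofReal ((3:ℝ) ^ ((d:ℝ)/2) * Real.exp (-(M^2)/3)) := by
  set c : ℝ := (2 * π) ^ (-(d : ℝ) / 2) with hc
  have hc0 : 0 ≤ c := Real.rpow_nonneg (by positivity) _
  have hScont : Continuous fun x : EuclideanSpace ℝ (Fin d) => Metric.infDist x Θ :=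
    Metric.continuous_infDist_pt Θ
  have hS : MeasurableSet {x : EuclideanSpace ℝ (Fin d) | M < Metric.infDist x Θ} :=
    measurableSet_lt measurable_const hScont.measurable
  rw [withDensity_apply _ hS]
  set S := {x : EuclideanSpace ℝ (Fin d) | M < Metric.infDist x Θ}
  have hker : Continuous (fun p : EuclideanSpace ℝ (Fin d) × EuclideanSpace ℝ (Fin d) =>
      rexp (-‖p.1 - p.2‖ ^ 2 / 2)) := by fun_prop
  have hint : ∀ x : EuclideanSpace ℝ (Fin d),
      Integrable (fun θ => rexp (-‖x - θ‖ ^ 2 / 2)) μstar := by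
    intro x
    refine (integrable_const (1:ℝ)).mono' ?_ ?_
    · exact (hker.comp (Continuous.prodMk_right x)).aestronglyMeasurable
    · refine Filter.Eventually.of_forall fun θ => ?_
      rw [Real.norm_eq_abs, abs_of_pos (Real.exp_pos _)]
      exact Real.exp_le_one_iff.mpr (by nlinarith [sq_nonneg ‖x - θ‖])
  have hdens : ∀ x, ENNReal.ofReal (gaussianMixture μstar x)
      = ENNReal.ofReal c * ∫⁻ θ, ENNReal.ofReal (rexp (-‖x - θ‖ ^ 2 / 2)) ∂μstar := by
    intro x
    rw [gaussianMixture, ENNReal.ofReal_mul hc0,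
      ofReal_integral_eq_lintegral_ofReal (hint x)
        (Filter.Eventually.of_forall fun θ => (Real.exp_pos _).le)]
  simp_rw [hdens]
  rw [lintegral_const_mul' _ _ ENNReal.ofReal_ne_top]
  rw [lintegral_lintegral_swap]
  swap
  · exact ((ENNReal.continuous_ofReal.comp hker).measurable).aemeasurable
  have hae : ∀ᵐ θ ∂μstar, θ ∈ Θ := by
    rw [MeasureTheory.ae_iff]
    exact hsupp
  have hbound : ∀ᵐ θ ∂μstar,
      (∫⁻ x in S, ENNReal.ofReal (rexp (-‖x - θ‖ ^ 2 / 2)))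
        ≤ ENNReal.ofReal (rexp (-(M^2)/3)) * ENNReal.ofReal ((6*π) ^ ((d:ℝ)/2)) := by
    filter_upwards [hae] with θ hθ
    have step1 : (∫⁻ x in S, ENNReal.ofReal (rexp (-‖x - θ‖ ^ 2 / 2)))
        ≤ ∫⁻ x, ENNReal.ofReal (rexp (-(M^2)/3) * rexp (-(1/6) * ‖x - θ‖ ^ 2)) := by
      refine le_trans (setLIntegral_mono (by fun_prop) fun x hx => ?_)
        (setLIntegral_le_lintegral _ _)
      refine ENNReal.ofReal_le_ofReal ?_
      rw [← Real.exp_add]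
      apply Real.exp_le_exp.mpr
      have h1 : M < ‖x - θ‖ := lt_of_lt_of_le hx
        (by rw [← dist_eq_norm]; exact Metric.infDist_le_dist_of_mem hθ)
      nlinarith [sq_nonneg (‖x - θ‖ - M), sq_nonneg M]
    refine step1.trans ?_
    simp_rw [ENNReal.ofReal_mul (Real.exp_pos _).le]
    rw [lintegral_const_mul' _ _ ENNReal.ofReal_ne_top,
      ofReal_integral_eq_lintegral_ofReal (gauss_integrable d θ)
        (Filter.Eventually.of_forall fun x => (Real.exp_pos _).le) |>.symm,
      gauss_int]
  calc ENNReal.ofReal c * ∫⁻ θ, (∫⁻ x in S, ENNReal.ofReal (rexp (-‖x - θ‖ ^ 2 / 2))) ∂μstar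
      ≤ ENNReal.ofReal c *
        (ENNReal.ofReal (rexp (-(M^2)/3)) * ENNReal.ofReal ((6*π) ^ ((d:ℝ)/2))) := by
        refine mul_le_mul_right ?_ _
        refine le_trans (lintegral_mono_ae hbound) ?_
        simp [lintegral_const]
    _ = ENNReal.ofReal (c * ((6*π) ^ ((d:ℝ)/2)) * rexp (-(M^2)/3)) := by
        rw [← ENNReal.ofReal_mul (Real.exp_pos _).le, ← ENNReal.ofReal_mul hc0]
        congr 1
        ring
    _ = ENNReal.ofReal ((3:ℝ) ^ ((d:ℝ)/2) * Real.exp (-(M^2)/3)) := by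
        congr 2
        rw [hc, neg_div, Real.rpow_neg (by positivity), inv_mul_eq_div,
          ← Real.div_rpow (by positivity) (by positivity)]
        congr 1
        have : π ≠ 0 := Real.pi_ne_zero
        field_simp
        ring

/-- For i.i.d. samples from a Gaussian mixture whose mixing measure is supported in a
compact set `Θ`, with `M = 3√(log n)` and `Θ_M` the `M`-fattening of `Θ`,
`E[∏ᵢ (1 + n² 𝟙(Xᵢ ∉ Θ_M))] ≤ exp(exp d)`. -/
theorem expectation_prod_indicator_bound {d : ℕ} (n : ℕ) (hn : 1 ≤ n)
    (Θ : Set (EuclideanSpace ℝ (Fin d))) (hΘ : IsCompact Θ)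
    (μstar : Measure (EuclideanSpace ℝ (Fin d))) [IsProbabilityMeasure μstar]
    (hsupp : μstar Θᶜ = 0)
    {Ω : Type*} [MeasurableSpace Ω] (P : Measure Ω) [IsProbabilityMeasure P]
    (X : Fin n → Ω → EuclideanSpace ℝ (Fin d))
    (hmeas : ∀ i, Measurable (X i))
    (hindep : iIndepFun X P)
    (hlaw : ∀ i, P.map (X i)
      = volume.withDensity fun x => ENNReal.ofReal (gaussianMixture μstar x)) :
    ∫ ω, (∏ i, (1 + (n : ℝ) ^ 2 *
        (if Metric.infDist (X i ω) Θ ≤ 3 * Real.sqrt (Real.log n) then 0 else 1))) ∂P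
      ≤ Real.exp (Real.exp d) := by
  set M : ℝ := 3 * Real.sqrt (Real.log n) with hMdef
  have hM : 0 ≤ M := by positivity
  have hn0 : (0:ℝ) < n := by exact_mod_cast hn
  set g : EuclideanSpace ℝ (Fin d) → ℝ :=
    fun x => 1 + (n : ℝ) ^ 2 * (if Metric.infDist x Θ ≤ M then 0 else 1) with hgdef
  have hSmeas : MeasurableSet {x : EuclideanSpace ℝ (Fin d) | Metric.infDist x Θ ≤ M} :=
    measurableSet_le (Metric.continuous_infDist_pt Θ).measurable measurable_const
  have hg : Measurable g := by
    apply Measurable.add measurable_const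
    exact (Measurable.ite hSmeas measurable_const measurable_const).const_mul _
  have hg0 : ∀ x, 0 ≤ g x := by
    intro x
    rw [hgdef]
    dsimp only
    split <;> positivity
  -- factor the expectation
  rw [show (∫ ω, (∏ i, (1 + (n : ℝ) ^ 2 *
        (if Metric.infDist (X i ω) Θ ≤ M then 0 else 1))) ∂P)
      = ∫ ω, ∏ i, g (X i ω) ∂P from rfl,
    integral_prod_indep P X hmeas hindep g hg hg0 Finset.univ]
  -- bound each factor
  have hfactor : ∀ i, ∫ ω, g (X i ω) ∂P ≤ Real.exp (Real.exp d / n) := by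
    intro i
    rw [← integral_map (hmeas i).aemeasurable hg.aestronglyMeasurable, hlaw i]
    set ν := volume.withDensity fun x => ENNReal.ofReal (gaussianMixture μstar x) with hν
    haveI : IsProbabilityMeasure ν := by
      rw [← hlaw i]; exact Measure.isProbabilityMeasure_map (hmeas i).aemeasurable
    set S := {x : EuclideanSpace ℝ (Fin d) | M < Metric.infDist x Θ} with hSdef
    have hS : MeasurableSet S :=
      measurableSet_lt measurable_const (Metric.continuous_infDist_pt Θ).measurable
    have hgind : ∀ x, g x = 1 + (n:ℝ)^2 * S.indicator (fun _ => (1:ℝ)) x := by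
      intro x
      rw [hgdef]
      dsimp only
      by_cases h : Metric.infDist x Θ ≤ M
      · simp [Set.indicator, hSdef, h, not_lt.mpr h, Pi.one_apply]
      · simp [Set.indicator, hSdef, h, lt_of_not_ge h, Pi.one_apply]
    simp_rw [hgind]
    rw [integral_add (integrable_const 1)
        ((((integrable_const (1:ℝ)).indicator hS)).const_mul _),
      integral_const, integral_const_mul, integral_indicator_const (1:ℝ) hS]
    simp only [Measure.real, measure_univ, ENNReal.toReal_one, smul_eq_mul, mul_one]
    -- the measure bound
    have htail := tail_bound Θ μstar hsupp hM
    have hL0 : 0 ≤ Real.log n := Real.log_natCast_nonneg n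
    have hexp : rexp (-(M^2)/3) = ((n:ℝ)^3)⁻¹ := by
      have hM2 : -(M^2)/3 = -(3 * Real.log n) := by
        rw [hMdef, mul_pow, Real.sq_sqrt hL0]; ring
      rw [hM2, Real.exp_neg]
      congr 1
      rw [show (3:ℝ) * Real.log n = Real.log ((n:ℝ)^3) by rw [Real.log_pow]; push_cast; ring,
        Real.exp_log (by positivity)]
    have h3d : (3:ℝ) ^ ((d:ℝ)/2) ≤ Real.exp d := by
      rw [Real.rpow_def_of_pos (by norm_num : (0:ℝ) < 3)]
      apply Real.exp_le_exp.mpr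
      have hlog3 : Real.log 3 ≤ 2 := by
        rw [Real.log_le_iff_le_exp (by norm_num)]
        have := Real.add_one_le_exp (2:ℝ)
        linarith
      nlinarith [Nat.cast_nonneg (α := ℝ) d]
    have hνS : (ν S).toReal ≤ Real.exp d * ((n:ℝ)^3)⁻¹ := by
      apply ENNReal.toReal_le_of_le_ofReal (by positivity)
      refine htail.trans (ENNReal.ofReal_le_ofReal ?_)
      rw [hexp]
      apply mul_le_mul_of_nonneg_right h3d (by positivity)
    have hkey : 1 + (n:ℝ)^2 * (ν S).toReal ≤ 1 + Real.exp d / n := by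
      have h1 : (n:ℝ)^2 * (ν S).toReal ≤ (n:ℝ)^2 * (Real.exp d * ((n:ℝ)^3)⁻¹) :=
        mul_le_mul_of_nonneg_left hνS (by positivity)
      have h2 : (n:ℝ)^2 * (Real.exp d * ((n:ℝ)^3)⁻¹) = Real.exp d / n := by
        field_simp
      linarith
    refine hkey.trans ?_
    have := Real.add_one_le_exp (Real.exp d / n)
    linarith
  -- combine
  calc ∏ i, ∫ ω, g (X i ω) ∂P
      ≤ ∏ _i : Fin n, Real.exp (Real.exp d / n) := by
        apply Finset.prod_le_prod
        · intro i _
          exact integral_nonneg fun ω => hg0 _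
        · intro i _
          exact hfactor i
    _ = Real.exp (Real.exp d) := by
        rw [Finset.prod_const, Finset.card_univ, Fintype.card_fin, ← Real.exp_nat_mul]
        congr 1
        field_simp
end

section
/- Let Θ̃ ⊂ ℝ^d be compact and τ > 0. Let f_* be a Gaussian location mixture density whose mixing measure μ_* satisfies ∫ exp(3‖θ‖²/2) dμ_*(θ) < ∞ (in particular if μ_* is compactly supported). Then there exists a finite constant C, depending only on Θ̃, d, τ and μ_*, such that for every Gaussian location mixture density f whose mixing measure assigns mass at least τ to Θ̃, one has ∫ f_*(x) (f_*(x)/f(x))^{1/2} dx ≤ C. -/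
open MeasureTheory Real
open scoped ENNReal RealInnerProductSpace

section AuxLemmas

/-- integrability of `exp ∘ g` for nonpositive continuous `g` against a finite measure -/
lemma integrable_exp_of_nonpos' {α : Type*} [MeasurableSpace α] [TopologicalSpace α]
    [OpensMeasurableSpace α] (μ : Measure α) [IsFiniteMeasure μ] {g : α → ℝ}
    (hg : Continuous g) (h : ∀ a, g a ≤ 0) :
    Integrable (fun a => Real.exp (g a)) μ := by
  refine (integrable_const (1 : ℝ)).mono' ((Real.continuous_exp.comp hg).aestronglyMeasurable) ?_
  filter_upwards with a
  rw [Real.norm_eq_abs, abs_of_pos (Real.exp_pos _)]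
  calc Real.exp (g a) ≤ Real.exp 0 := Real.exp_le_exp.2 (h a)
  _ = 1 := Real.exp_zero

lemma gm_continuous' {d : ℕ} (μ : Measure (EuclideanSpace ℝ (Fin d))) [IsFiniteMeasure μ] :
    Continuous (gaussianMixture μ) := by
  unfold gaussianMixture
  refine continuous_const.mul ?_
  refine MeasureTheory.continuous_of_dominated (bound := fun _ => (1:ℝ)) ?_ ?_ ?_ ?_
  · intro x
    exact ((Real.continuous_exp.comp (by fun_prop : Continuous fun θ : EuclideanSpace ℝ (Fin d) =>
      -‖x - θ‖ ^ 2 / 2))).aestronglyMeasurable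
  · intro x
    filter_upwards with θ
    rw [Real.norm_eq_abs, abs_of_pos (Real.exp_pos _)]
    calc Real.exp (-‖x - θ‖ ^ 2 / 2) ≤ Real.exp 0 :=
          Real.exp_le_exp.2 (by nlinarith [sq_nonneg ‖x - θ‖])
    _ = 1 := Real.exp_zero
  · exact integrable_const 1
  · filter_upwards with θ
    fun_prop

lemma gm_nonneg' {d : ℕ} (μ : Measure (EuclideanSpace ℝ (Fin d)))
    (x : EuclideanSpace ℝ (Fin d)) : 0 ≤ gaussianMixture μ x := by
  unfold gaussianMixture
  refine mul_nonneg (Real.rpow_nonneg (by positivity) _) ?_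
  exact integral_nonneg fun θ => (Real.exp_pos _).le

/-- Jensen/Hölder: `(∫ g)^{3/2} ≤ ∫ g^{3/2}` for `0 ≤ g ≤ 1` and a probability measure. -/
lemma holder32' {α : Type*} [MeasurableSpace α] (μ : Measure α) [IsProbabilityMeasure μ]
    {g : α → ℝ} (hgm : Measurable g) (hg0 : ∀ a, 0 ≤ g a) (hg1 : ∀ a, g a ≤ 1) :
    (∫ a, g a ∂μ) * Real.sqrt (∫ a, g a ∂μ) ≤ ∫ a, (g a) ^ (3/2 : ℝ) ∂μ := by
  set G : α → ℝ≥0∞ := fun a => ENNReal.ofReal (g a) with hG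
  have hGm : AEMeasurable G μ := (hgm.ennreal_ofReal).aemeasurable
  have hconj : (3/2 : ℝ).HolderConjugate 3 := ⟨by norm_num, by norm_num, by norm_num⟩
  have h1 := ENNReal.lintegral_mul_le_Lp_mul_Lq μ hconj hGm
    (aemeasurable_const (b := (1:ℝ≥0∞)))
  simp only [Pi.mul_apply, mul_one, ENNReal.one_rpow, lintegral_one, measure_univ,
    ENNReal.one_rpow] at h1
  have h1' : (∫⁻ a, G a ∂μ) ≤ (∫⁻ a, G a ^ (3/2 : ℝ) ∂μ) ^ (2/3 : ℝ) := by
    convert h1 using 2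
    all_goals norm_num
  have hQtop : (∫⁻ a, G a ^ (3/2 : ℝ) ∂μ) ≤ 1 := by
    calc (∫⁻ a, G a ^ (3/2 : ℝ) ∂μ) ≤ ∫⁻ _, 1 ∂μ := by
          refine lintegral_mono fun a => ?_
          refine ENNReal.rpow_le_one ?_ (by norm_num)
          simpa [hG] using ENNReal.ofReal_le_one.2 (hg1 a)
    _ = 1 := by simp
  have hQne : (∫⁻ a, G a ^ (3/2 : ℝ) ∂μ) ≠ ∞ := (lt_of_le_of_lt hQtop (by norm_num)).ne
  have hIrepr : ∫ a, g a ∂μ = (∫⁻ a, G a ∂μ).toReal := by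
    rw [integral_eq_lintegral_of_nonneg_ae (ae_of_all _ hg0) hgm.aestronglyMeasurable]
  have hQrepr : ∫ a, (g a) ^ (3/2 : ℝ) ∂μ = (∫⁻ a, G a ^ (3/2 : ℝ) ∂μ).toReal := by
    rw [integral_eq_lintegral_of_nonneg_ae (ae_of_all _ fun a => Real.rpow_nonneg (hg0 a) _)
      (((continuous_id.rpow_const fun _ => Or.inr (by norm_num : (0:ℝ) ≤ 3/2)).measurable.comp
        hgm).aestronglyMeasurable)]
    congr 1
    refine lintegral_congr fun a => ?_
    rw [hG, ← ENNReal.ofReal_rpow_of_nonneg (hg0 a) (by norm_num)]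
  set Q : ℝ := ∫ a, (g a) ^ (3/2 : ℝ) ∂μ with hQdef
  have hQ0 : 0 ≤ Q := integral_nonneg fun a => Real.rpow_nonneg (hg0 a) _
  have hIQ : ∫ a, g a ∂μ ≤ Q ^ (2/3 : ℝ) := by
    rw [hIrepr, hQrepr]
    calc (∫⁻ a, G a ∂μ).toReal ≤ ((∫⁻ a, G a ^ (3/2 : ℝ) ∂μ) ^ (2/3 : ℝ)).toReal := by
          refine ENNReal.toReal_mono ?_ h1'
          exact (ENNReal.rpow_lt_top_of_nonneg (by norm_num) hQne).ne
    _ = (∫⁻ a, G a ^ (3/2 : ℝ) ∂μ).toReal ^ (2/3 : ℝ) := (ENNReal.toReal_rpow _ _).symm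
  have hI0 : 0 ≤ ∫ a, g a ∂μ := integral_nonneg hg0
  calc (∫ a, g a ∂μ) * Real.sqrt (∫ a, g a ∂μ)
      ≤ (Q ^ (2/3 : ℝ)) * Real.sqrt (Q ^ (2/3 : ℝ)) := by
        have h2 := Real.sqrt_le_sqrt hIQ
        have h3 : 0 ≤ Q ^ (2/3:ℝ) := Real.rpow_nonneg hQ0 _
        exact mul_le_mul hIQ h2 (Real.sqrt_nonneg _) h3
  _ = Q := by
      rw [Real.sqrt_eq_rpow, ← Real.rpow_mul hQ0, ← Real.rpow_add' hQ0 (by norm_num),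
        show (2/3 + 2/3*(1/2) : ℝ) = 1 by norm_num, Real.rpow_one]

lemma integrable_gauss' {d : ℕ} (b : ℝ) (hb : 0 < b) :
    Integrable (fun x : EuclideanSpace ℝ (Fin d) => Real.exp (-b * ‖x‖ ^ 2)) := by
  have h := (GaussianFourier.integrable_cexp_neg_mul_sq_norm_add
    (V := EuclideanSpace ℝ (Fin d)) (b := (b : ℂ)) (by simpa using hb) 0 0).norm
  refine h.congr ?_
  filter_upwards with x
  rw [Complex.norm_exp]
  congr 1
  simp [← Complex.ofReal_pow]

end AuxLemmas

set_option maxHeartbeats 2000000 in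
/-- Uniform bound on `∫ f⋆ (f⋆/f)^{1/2}` over Gaussian mixtures `f` whose mixing measure
puts mass at least `τ` on a compact set `Θ̃`, assuming the mixing measure of `f⋆` has an
exponential moment `∫ exp(3‖θ‖²/2) dμ⋆ < ∞`. -/
theorem integral_ratio_sqrt_bound {d : ℕ}
    (Θ : Set (EuclideanSpace ℝ (Fin d))) (hΘ : IsCompact Θ) (τ : ℝ) (hτ : 0 < τ)
    (μstar : Measure (EuclideanSpace ℝ (Fin d))) [IsProbabilityMeasure μstar]
    (hmom : Integrable (fun θ => Real.exp (3 * ‖θ‖ ^ 2 / 2)) μstar) :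
    ∃ C : ℝ, ∀ (μ : Measure (EuclideanSpace ℝ (Fin d))), IsProbabilityMeasure μ →
      ENNReal.ofReal τ ≤ μ Θ →
      ∫ x, gaussianMixture μstar x *
        Real.sqrt (gaussianMixture μstar x / gaussianMixture μ x) ≤ C := by
  obtain ⟨R, hR⟩ := hΘ.isBounded.exists_norm_le
  set A : ℝ := (2 * π) ^ (-(d : ℝ) / 2) with hA
  have hA0 : 0 < A := Real.rpow_pos_of_pos (by positivity) _
  set c₁ : ℝ := A * τ * Real.exp (-(9/2) * R ^ 2) with hc₁def
  have hc₁ : 0 < c₁ := by positivity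
  -- the dominating kernel H
  set H : EuclideanSpace ℝ (Fin d) → EuclideanSpace ℝ (Fin d) → ℝ :=
    fun x θ => Real.exp (9/32 * ‖x‖ ^ 2) * Real.exp (-(3/4) * ‖x - θ‖ ^ 2) with hHdef
  have hHeq : ∀ x θ, H x θ
      = Real.exp (9/20 * ‖θ‖ ^ 2) * Real.exp (-(15/32) * ‖x - (8/5 : ℝ) • θ‖ ^ 2) := by
    intro x θ
    simp only [hHdef]
    rw [← Real.exp_add, ← Real.exp_add]
    congr 1
    rw [norm_sub_sq_real, norm_sub_sq_real, norm_smul, real_inner_smul_right]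
    simp only [Real.norm_eq_abs]
    rw [abs_of_nonneg (by norm_num : (0:ℝ) ≤ 8/5)]
    ring
  have hHpos : ∀ x θ, 0 < H x θ := fun x θ => mul_pos (Real.exp_pos _) (Real.exp_pos _)
  have hJint : Integrable (fun x : EuclideanSpace ℝ (Fin d) => Real.exp (-(15/32) * ‖x‖ ^ 2)) :=
    integrable_gauss' _ (by norm_num)
  set J : ℝ := ∫ x : EuclideanSpace ℝ (Fin d), Real.exp (-(15/32) * ‖x‖ ^ 2) with hJdef
  have hJ0 : 0 ≤ J := integral_nonneg fun x => (Real.exp_pos _).le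
  have hHx : ∀ θ, Integrable (fun x => H x θ) volume := by
    intro θ
    simp only [hHeq]
    exact (hJint.comp_sub_right ((8/5 : ℝ) • θ)).const_mul _
  have hHxint : ∀ θ, (∫ x, H x θ) = Real.exp (9/20 * ‖θ‖ ^ 2) * J := by
    intro θ
    simp only [hHeq]
    rw [integral_const_mul, hJdef,
      integral_sub_right_eq_self (fun x : EuclideanSpace ℝ (Fin d) =>
        Real.exp (-(15/32) * ‖x‖ ^ 2)) ((8/5 : ℝ) • θ)]
  have hcontH : Continuous (Function.uncurry H) := by
    simp only [hHdef]
    fun_prop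
  have hmom9 : Integrable (fun θ : EuclideanSpace ℝ (Fin d) =>
      Real.exp (9/20 * ‖θ‖ ^ 2) * J) μstar := by
    refine (hmom.mul_const J).mono' ?_ ?_
    · exact ((by fun_prop : Continuous fun θ : EuclideanSpace ℝ (Fin d) =>
        Real.exp (9/20 * ‖θ‖ ^ 2) * J)).aestronglyMeasurable
    · filter_upwards with θ
      rw [Real.norm_eq_abs, abs_mul, abs_of_pos (Real.exp_pos _), abs_of_nonneg hJ0]
      refine mul_le_mul_of_nonneg_right ?_ hJ0
      exact Real.exp_le_exp.2 (by nlinarith [sq_nonneg ‖θ‖])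
  have hHprod : Integrable (Function.uncurry H) (volume.prod μstar) := by
    refine (integrable_prod_iff' hcontH.aestronglyMeasurable).2 ⟨ae_of_all _ hHx, ?_⟩
    have heq : (fun θ => ∫ x, ‖Function.uncurry H (x, θ)‖)
        = fun θ => Real.exp (9/20 * ‖θ‖ ^ 2) * J := by
      funext θ
      rw [← hHxint θ]
      refine integral_congr_ae (ae_of_all _ fun x => ?_)
      simp only [Function.uncurry_apply_pair]
      rw [Real.norm_eq_abs, abs_of_pos (hHpos x θ)]
    rw [heq]
    exact hmom9
  have hswap := integral_integral_swap (f := H) hHprod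
  set K : ℝ := (∫ θ, Real.exp (3 * ‖θ‖ ^ 2 / 2) ∂μstar) * J with hKdef
  have hKbound : (∫ θ, (∫ x, H x θ) ∂μstar) ≤ K := by
    calc (∫ θ, (∫ x, H x θ) ∂μstar)
        = ∫ θ, Real.exp (9/20 * ‖θ‖ ^ 2) * J ∂μstar := by
          refine integral_congr_ae (ae_of_all _ fun θ => ?_)
          exact hHxint θ
    _ ≤ ∫ θ, Real.exp (3 * ‖θ‖ ^ 2 / 2) * J ∂μstar := by
        refine integral_mono hmom9 (hmom.mul_const J) fun θ => ?_
        refine mul_le_mul_of_nonneg_right ?_ hJ0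
        exact Real.exp_le_exp.2 (by nlinarith [sq_nonneg ‖θ‖])
    _ = K := by rw [hKdef, integral_mul_const]
  have hGint : Integrable (fun x => ∫ θ, H x θ ∂μstar) volume := hHprod.integral_prod_left
  set c₂ : ℝ := (Real.sqrt c₁)⁻¹ * (A * Real.sqrt A) with hc₂def
  have hc₂0 : 0 ≤ c₂ := by positivity
  refine ⟨c₂ * K, ?_⟩
  intro μ hμ hμΘ
  haveI := hμ
  -- lower bound on the mixture f
  have hlow : ∀ x, c₁ * Real.exp (-(9/16) * ‖x‖ ^ 2) ≤ gaussianMixture μ x := by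
    intro x
    have hker : Integrable (fun θ => Real.exp (-‖x - θ‖ ^ 2 / 2)) μ :=
      integrable_exp_of_nonpos' μ (by fun_prop) (fun θ => by nlinarith [sq_nonneg ‖x - θ‖])
    have h1 : ∫ θ in Θ, Real.exp (-‖x - θ‖ ^ 2 / 2) ∂μ
        ≤ ∫ θ, Real.exp (-‖x - θ‖ ^ 2 / 2) ∂μ :=
      setIntegral_le_integral hker (ae_of_all _ fun θ => (Real.exp_pos _).le)
    have h2 : ∀ θ ∈ Θ, Real.exp (-(9/16) * ‖x‖ ^ 2 + -(9/2) * R ^ 2)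
        ≤ Real.exp (-‖x - θ‖ ^ 2 / 2) := by
      intro θ hθ
      apply Real.exp_le_exp.2
      have hxθ : ‖x - θ‖ ≤ ‖x‖ + R := (norm_sub_le _ _).trans (by
        have := hR θ hθ; linarith)
      have h3 : ‖x - θ‖ ^ 2 ≤ (‖x‖ + R) ^ 2 := by
        have h4 : (0:ℝ) ≤ ‖x - θ‖ := norm_nonneg _
        nlinarith
      nlinarith [sq_nonneg (‖x‖ - 8 * R)]
    have h4 : (μ Θ).toReal * Real.exp (-(9/16) * ‖x‖ ^ 2 + -(9/2) * R ^ 2)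
        ≤ ∫ θ in Θ, Real.exp (-‖x - θ‖ ^ 2 / 2) ∂μ := by
      have h5 := setIntegral_mono_on
        (f := fun _ => Real.exp (-(9/16) * ‖x‖ ^ 2 + -(9/2) * R ^ 2))
        (integrableOn_const (measure_ne_top μ Θ))
        hker.integrableOn hΘ.measurableSet h2
      simpa [smul_eq_mul, measureReal_def] using h5
    have hτR : τ ≤ (μ Θ).toReal := by
      have h5 := ENNReal.toReal_mono (measure_ne_top μ Θ) hμΘ
      rwa [ENNReal.toReal_ofReal hτ.le] at h5
    have hgm : gaussianMixture μ x = A * ∫ θ, Real.exp (-‖x - θ‖ ^ 2 / 2) ∂μ := by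
      rw [gaussianMixture, ← hA]
    rw [hgm]
    calc c₁ * Real.exp (-(9/16) * ‖x‖ ^ 2)
        = A * (τ * Real.exp (-(9/16) * ‖x‖ ^ 2 + -(9/2) * R ^ 2)) := by
          rw [Real.exp_add, hc₁def]; ring
    _ ≤ A * ((μ Θ).toReal * Real.exp (-(9/16) * ‖x‖ ^ 2 + -(9/2) * R ^ 2)) := by
        refine mul_le_mul_of_nonneg_left ?_ hA0.le
        exact mul_le_mul_of_nonneg_right hτR (Real.exp_pos _).le
    _ ≤ A * ∫ θ in Θ, Real.exp (-‖x - θ‖ ^ 2 / 2) ∂μ :=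
        mul_le_mul_of_nonneg_left h4 hA0.le
    _ ≤ A * ∫ θ, Real.exp (-‖x - θ‖ ^ 2 / 2) ∂μ :=
        mul_le_mul_of_nonneg_left h1 hA0.le
  -- Jensen step for f⋆
  have hJen : ∀ x, gaussianMixture μstar x * Real.sqrt (gaussianMixture μstar x)
      ≤ (A * Real.sqrt A) * ∫ θ, Real.exp (-(3/4) * ‖x - θ‖ ^ 2) ∂μstar := by
    intro x
    have hgmeas : Measurable fun θ : EuclideanSpace ℝ (Fin d) =>
        Real.exp (-‖x - θ‖ ^ 2 / 2) :=
      ((by fun_prop : Continuous fun θ : EuclideanSpace ℝ (Fin d) =>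
        Real.exp (-‖x - θ‖ ^ 2 / 2))).measurable
    have hg1 : ∀ θ : EuclideanSpace ℝ (Fin d), Real.exp (-‖x - θ‖ ^ 2 / 2) ≤ 1 := by
      intro θ
      calc Real.exp (-‖x - θ‖ ^ 2 / 2) ≤ Real.exp 0 :=
            Real.exp_le_exp.2 (by nlinarith [sq_nonneg ‖x - θ‖])
      _ = 1 := Real.exp_zero
    have hI := holder32' μstar hgmeas (fun θ => (Real.exp_pos _).le) hg1
    have hpow : ∀ θ : EuclideanSpace ℝ (Fin d),
        (Real.exp (-‖x - θ‖ ^ 2 / 2)) ^ (3/2 : ℝ) = Real.exp (-(3/4) * ‖x - θ‖ ^ 2) := by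
      intro θ
      rw [← Real.exp_mul]
      congr 1
      ring
    have hgm : gaussianMixture μstar x = A * ∫ θ, Real.exp (-‖x - θ‖ ^ 2 / 2) ∂μstar := by
      rw [gaussianMixture, ← hA]
    rw [hgm, Real.sqrt_mul hA0.le]
    set I : ℝ := ∫ θ, Real.exp (-‖x - θ‖ ^ 2 / 2) ∂μstar with hIdef
    calc A * I * (Real.sqrt A * Real.sqrt I)
        = (A * Real.sqrt A) * (I * Real.sqrt I) := by ring
    _ ≤ (A * Real.sqrt A) * ∫ θ, Real.exp (-(3/4) * ‖x - θ‖ ^ 2) ∂μstar := by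
        refine mul_le_mul_of_nonneg_left ?_ (by positivity)
        calc I * Real.sqrt I ≤ ∫ θ, (Real.exp (-‖x - θ‖ ^ 2 / 2)) ^ (3/2 : ℝ) ∂μstar := hI
        _ = ∫ θ, Real.exp (-(3/4) * ‖x - θ‖ ^ 2) ∂μstar :=
            integral_congr_ae (ae_of_all _ fun θ => hpow θ)
  -- pointwise bound for the target integrand
  have hpt : ∀ x, gaussianMixture μstar x *
      Real.sqrt (gaussianMixture μstar x / gaussianMixture μ x) ≤ c₂ * ∫ θ, H x θ ∂μstar := by
    intro x
    have hfs0 : 0 ≤ gaussianMixture μstar x := gm_nonneg' _ _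
    have hL : 0 < c₁ * Real.exp (-(9/16) * ‖x‖ ^ 2) := by positivity
    have hsqL : Real.sqrt (c₁ * Real.exp (-(9/16) * ‖x‖ ^ 2))
        = Real.sqrt c₁ * Real.exp (-(9/32) * ‖x‖ ^ 2) := by
      rw [Real.sqrt_mul hc₁.le]
      congr 1
      rw [show (-(9/16) * ‖x‖ ^ 2 : ℝ) = (-(9/32) * ‖x‖ ^ 2) + (-(9/32) * ‖x‖ ^ 2) by ring,
        Real.exp_add, Real.sqrt_mul_self (Real.exp_pos _).le]
    have hsq : Real.sqrt (gaussianMixture μstar x / gaussianMixture μ x)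
        ≤ Real.sqrt (gaussianMixture μstar x) / (Real.sqrt c₁ * Real.exp (-(9/32) * ‖x‖ ^ 2)) := by
      rw [← hsqL, ← Real.sqrt_div hfs0]
      refine Real.sqrt_le_sqrt ?_
      gcongr
      exact hlow x
    have hQeq : (∫ θ, H x θ ∂μstar)
        = Real.exp (9/32 * ‖x‖ ^ 2) * ∫ θ, Real.exp (-(3/4) * ‖x - θ‖ ^ 2) ∂μstar := by
      simp only [hHdef]
      rw [integral_const_mul]
    have hexpinv : (Real.exp (-(9/32) * ‖x‖ ^ 2))⁻¹ = Real.exp (9/32 * ‖x‖ ^ 2) := by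
      rw [show (-(9/32) * ‖x‖ ^ 2 : ℝ) = -(9/32 * ‖x‖ ^ 2) by ring, Real.exp_neg, inv_inv]
    calc gaussianMixture μstar x * Real.sqrt (gaussianMixture μstar x / gaussianMixture μ x)
        ≤ gaussianMixture μstar x * (Real.sqrt (gaussianMixture μstar x)
            / (Real.sqrt c₁ * Real.exp (-(9/32) * ‖x‖ ^ 2))) :=
          mul_le_mul_of_nonneg_left hsq hfs0
    _ = (gaussianMixture μstar x * Real.sqrt (gaussianMixture μstar x))
          * ((Real.sqrt c₁)⁻¹ * Real.exp (9/32 * ‖x‖ ^ 2)) := by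
        rw [div_eq_mul_inv, mul_inv, hexpinv]
        ring
    _ ≤ ((A * Real.sqrt A) * ∫ θ, Real.exp (-(3/4) * ‖x - θ‖ ^ 2) ∂μstar)
          * ((Real.sqrt c₁)⁻¹ * Real.exp (9/32 * ‖x‖ ^ 2)) := by
        refine mul_le_mul_of_nonneg_right (hJen x) ?_
        positivity
    _ = c₂ * (Real.exp (9/32 * ‖x‖ ^ 2) * ∫ θ, Real.exp (-(3/4) * ‖x - θ‖ ^ 2) ∂μstar) := by
        rw [hc₂def]; ring
    _ = c₂ * ∫ θ, H x θ ∂μstar := by rw [hQeq]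
  -- integrability of the target integrand and conclusion
  have hF0 : ∀ x, 0 ≤ gaussianMixture μstar x *
      Real.sqrt (gaussianMixture μstar x / gaussianMixture μ x) :=
    fun x => mul_nonneg (gm_nonneg' _ _) (Real.sqrt_nonneg _)
  have hFm : AEStronglyMeasurable (fun x => gaussianMixture μstar x *
      Real.sqrt (gaussianMixture μstar x / gaussianMixture μ x)) volume :=
    ((gm_continuous' μstar).measurable.mul (Real.continuous_sqrt.measurable.comp
      ((gm_continuous' μstar).measurable.div (gm_continuous' μ).measurable))).aestronglyMeasurable
  have hFint : Integrable (fun x => gaussianMixture μstar x *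
      Real.sqrt (gaussianMixture μstar x / gaussianMixture μ x)) volume := by
    refine (hGint.const_mul c₂).mono' hFm ?_
    filter_upwards with x
    rw [Real.norm_eq_abs, abs_of_nonneg (hF0 x)]
    exact hpt x
  calc ∫ x, gaussianMixture μstar x *
      Real.sqrt (gaussianMixture μstar x / gaussianMixture μ x)
      ≤ ∫ x, c₂ * ∫ θ, H x θ ∂μstar := integral_mono hFint (hGint.const_mul c₂) hpt
  _ = c₂ * ∫ x, ∫ θ, H x θ ∂μstar := integral_const_mul _ _
  _ = c₂ * ∫ θ, (∫ x, H x θ) ∂μstar := by rw [hswap]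
  _ ≤ c₂ * K := mul_le_mul_of_nonneg_left hKbound hc₂0
end

section
/- Let Θ ⊂ ℝ^d be compact, τ ∈ (0,1], and let 𝓜(Θ;τ) be the class of Gaussian location mixture densities f whose mixing measure μ_f satisfies μ_f(Θ) ≥ τ. Then there exist constants C₁, C₂ > 0 (depending only on Θ, d, τ) such that for every f ∈ 𝓜(Θ;τ) and every x ∈ ℝ^d, ‖∇ log f(x)‖ ≤ C₁‖x‖ + C₂. -/
open MeasureTheory Real

lemma gaussDeriv {d : ℕ} (θ x : EuclideanSpace ℝ (Fin d)) :
    HasFDerivAt (fun y : EuclideanSpace ℝ (Fin d) => Real.exp (-‖y - θ‖ ^ 2 / 2))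
      ((-Real.exp (-‖x - θ‖ ^ 2 / 2)) • innerSL ℝ (x - θ)) x := by
  have h1 : HasFDerivAt (fun y : EuclideanSpace ℝ (Fin d) => y - θ)
      (ContinuousLinearMap.id ℝ _) x := (hasFDerivAt_id x).sub_const θ
  have h2 := h1.norm_sq
  have h3 := (h2.const_mul ((-1 : ℝ)/2)).exp
  have heq : (fun y : EuclideanSpace ℝ (Fin d) => Real.exp (-‖y - θ‖ ^ 2 / 2))
      = fun y => Real.exp ((-1)/2 * ‖y - θ‖ ^ 2) := by
    funext y; ring_nf
  rw [heq]
  have harg : (-1 : ℝ)/2 * ‖x - θ‖ ^ 2 = -‖x - θ‖ ^ 2 / 2 := by ring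
  rw [harg] at h3
  refine h3.congr_fderiv ?_
  ext v
  simp [ContinuousLinearMap.smul_apply]
  ring

lemma gaussDerivNorm {d : ℕ} (θ x : EuclideanSpace ℝ (Fin d)) :
    ‖(-Real.exp (-‖x - θ‖ ^ 2 / 2)) • innerSL ℝ (x - θ)‖
      = ‖x - θ‖ * Real.exp (-‖x - θ‖ ^ 2 / 2) := by
  rw [norm_smul (-Real.exp (-‖x - θ‖ ^ 2 / 2)) ((innerSL ℝ) (x - θ)), innerSL_apply_norm]
  rw [norm_neg, Real.norm_eq_abs, abs_of_pos (Real.exp_pos _)]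
  ring

lemma aux1 {t : ℝ} (ht : 0 ≤ t) : t * Real.exp (-t ^ 2 / 2) ≤ 1 := by
  have h := Real.add_one_le_exp (t ^ 2 / 2)
  have he := Real.exp_pos (t ^ 2 / 2)
  have hrw : Real.exp (-t ^ 2 / 2) = (Real.exp (t ^ 2 / 2))⁻¹ := by
    rw [← Real.exp_neg]; ring_nf
  rw [hrw, mul_inv_le_iff₀' he]
  nlinarith

lemma aux2 {A t : ℝ} (hA : 1 ≤ A) (ht : A ≤ t) :
    t * Real.exp (-t ^ 2 / 2) ≤ A * Real.exp (-A ^ 2 / 2) := by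
  have key : t * Real.exp (-(t ^ 2 - A ^ 2) / 2) ≤ A := by
    have h := Real.add_one_le_exp ((t ^ 2 - A ^ 2) / 2)
    have he := Real.exp_pos ((t ^ 2 - A ^ 2) / 2)
    have hrw : Real.exp (-(t ^ 2 - A ^ 2) / 2) = (Real.exp ((t ^ 2 - A ^ 2) / 2))⁻¹ := by
      rw [← Real.exp_neg]; ring_nf
    rw [hrw, mul_inv_le_iff₀' he]
    have hA0 : (0 : ℝ) ≤ A := by linarith
    have h2 : A * ((t ^ 2 - A ^ 2) / 2 + 1) ≤ A * Real.exp ((t ^ 2 - A ^ 2) / 2) :=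
      mul_le_mul_of_nonneg_left h hA0
    have hsq : (0:ℝ) ≤ t ^ 2 - A ^ 2 := by
      nlinarith [mul_nonneg (sub_nonneg.2 ht) (by linarith : (0:ℝ) ≤ t + A)]
    have h3 : (0:ℝ) ≤ (A - 1) * (t ^ 2 - A ^ 2) := mul_nonneg (by linarith) hsq
    have h4 : (0:ℝ) ≤ (t - A) * (t + A - 2) := mul_nonneg (by linarith) (by linarith)
    nlinarith
  have hsplit : t * Real.exp (-t ^ 2 / 2)
      = (t * Real.exp (-(t ^ 2 - A ^ 2) / 2)) * Real.exp (-A ^ 2 / 2) := by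
    rw [mul_assoc, ← Real.exp_add]; ring_nf
  rw [hsplit]
  exact mul_le_mul_of_nonneg_right key (Real.exp_pos _).le

set_option maxHeartbeats 1000000 in
/-- Linear-growth bound on the gradient of the log-density, uniform over the class
`𝓜(Θ;τ)` of Gaussian mixtures whose mixing measure puts mass at least `τ` on the
compact set `Θ`. -/
theorem norm_fderiv_log_gaussianMixture_le {d : ℕ}
    (Θ : Set (EuclideanSpace ℝ (Fin d))) (hΘ : IsCompact Θ)
    (τ : ℝ) (hτ : τ ∈ Set.Ioc (0 : ℝ) 1) :
    ∃ C₁ > (0 : ℝ), ∃ C₂ > (0 : ℝ),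
      ∀ (μ : Measure (EuclideanSpace ℝ (Fin d))), IsProbabilityMeasure μ →
        ENNReal.ofReal τ ≤ μ Θ →
        ∀ x, ‖fderiv ℝ (fun y => Real.log (gaussianMixture μ y)) x‖
          ≤ C₁ * ‖x‖ + C₂ := by
  obtain ⟨r, hr⟩ := hΘ.isBounded.subset_closedBall 0
  obtain ⟨R, hRdef⟩ : ∃ R : ℝ, R = max r 0 := ⟨_, rfl⟩
  have hR0 : 0 ≤ R := hRdef ▸ le_max_right r 0
  have hΘR : ∀ θ ∈ Θ, ‖θ‖ ≤ R := by
    intro θ hθ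
    have := hr hθ
    rw [Metric.mem_closedBall, dist_zero_right] at this
    exact this.trans (hRdef ▸ le_max_left r 0)
  have hlogτ : Real.log τ ≤ 0 := Real.log_nonpos hτ.1.le hτ.2
  obtain ⟨s, hsdef⟩ : ∃ s : ℝ, s = Real.sqrt (-2 * Real.log τ) := ⟨_, rfl⟩
  have hs0 : 0 ≤ s := hsdef ▸ Real.sqrt_nonneg _
  have hs2 : s ^ 2 = -2 * Real.log τ := by
    rw [hsdef]; exact Real.sq_sqrt (by linarith)
  refine ⟨2, by norm_num, 2 * (R + s + 1), by positivity, ?_⟩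
  intro μ hprob hμΘ x
  obtain ⟨c, hcdef⟩ : ∃ c : ℝ, c = (2 * π) ^ (-(d : ℝ) / 2) := ⟨_, rfl⟩
  have hc0 : 0 < c := by rw [hcdef]; exact Real.rpow_pos_of_pos (by positivity) _
  obtain ⟨w, hwdef⟩ : ∃ w : EuclideanSpace ℝ (Fin d) → ℝ,
      w = fun θ => Real.exp (-‖x - θ‖ ^ 2 / 2) := ⟨_, rfl⟩
  have hw_pos : ∀ θ, 0 < w θ := fun θ => hwdef ▸ Real.exp_pos _
  have cw : Continuous w := by
    rw [hwdef]
    exact Real.continuous_exp.comp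
      (((continuous_const.sub continuous_id).norm.pow 2).neg.div_const 2)
  have hw_le_one : ∀ θ, w θ ≤ 1 := by
    intro θ
    rw [hwdef, ← Real.exp_zero]
    apply Real.exp_le_exp.2
    have : (0:ℝ) ≤ ‖x - θ‖ ^ 2 := by positivity
    linarith
  have int_w : Integrable w μ := by
    refine (integrable_const (1:ℝ)).mono' cw.aestronglyMeasurable (ae_of_all _ fun θ => ?_)
    rw [Real.norm_eq_abs, abs_of_pos (hw_pos θ)]
    exact hw_le_one θ
  obtain ⟨I, hIdef⟩ : ∃ I : ℝ, I = ∫ θ, w θ ∂μ := ⟨_, rfl⟩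
  obtain ⟨B, hBdef⟩ : ∃ B : ℝ, B = ‖x‖ + R := ⟨_, rfl⟩
  have hB0 : 0 ≤ B := by rw [hBdef]; positivity
  -- lower bound for I
  have hlow : τ * Real.exp (-B ^ 2 / 2) ≤ I := by
    have hmeas : MeasurableSet Θ := hΘ.isClosed.measurableSet
    have hτΘ : τ ≤ (μ Θ).toReal := by
      have := ENNReal.toReal_mono (measure_ne_top μ Θ) hμΘ
      rwa [ENNReal.toReal_ofReal hτ.1.le] at this
    have hc2 : ∀ θ ∈ Θ, Real.exp (-B ^ 2 / 2) ≤ w θ := by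
      intro θ hθ
      rw [hwdef]
      apply Real.exp_le_exp.2
      have h1 : ‖x - θ‖ ≤ B := by
        rw [hBdef]
        calc ‖x - θ‖ ≤ ‖x‖ + ‖θ‖ := norm_sub_le x θ
        _ ≤ ‖x‖ + R := by linarith [hΘR θ hθ]
      have h2 : ‖x - θ‖ ^ 2 ≤ B ^ 2 := pow_le_pow_left₀ (norm_nonneg _) h1 2
      linarith
    rw [hIdef]
    calc τ * Real.exp (-B ^ 2 / 2)
        ≤ (μ Θ).toReal * Real.exp (-B ^ 2 / 2) :=
          mul_le_mul_of_nonneg_right hτΘ (Real.exp_pos _).le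
      _ = Real.exp (-B ^ 2 / 2) * (μ Θ).toReal := mul_comm _ _
      _ ≤ ∫ θ in Θ, w θ ∂μ :=
          setIntegral_ge_of_const_le_real hmeas (measure_ne_top μ Θ) hc2 int_w.integrableOn
      _ ≤ ∫ θ, w θ ∂μ := setIntegral_le_integral int_w (ae_of_all _ fun θ => (hw_pos θ).le)
  have hI0 : 0 < I :=
    lt_of_lt_of_le (mul_pos hτ.1 (Real.exp_pos _)) hlow
  -- the derivative of the integral
  obtain ⟨D, hDdef⟩ : ∃ D : (EuclideanSpace ℝ (Fin d)) →L[ℝ] ℝ,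
      D = ∫ θ, (-Real.exp (-‖x - θ‖ ^ 2 / 2)) • innerSL ℝ (x - θ) ∂μ := ⟨_, rfl⟩
  have contF' : Continuous fun θ : EuclideanSpace ℝ (Fin d) =>
      (-Real.exp (-‖x - θ‖ ^ 2 / 2)) • innerSL ℝ (x - θ) := by
    apply Continuous.smul (f := fun θ => -Real.exp (-‖x - θ‖ ^ 2 / 2)) (g := fun θ => innerSL ℝ (x - θ))
    · exact (Real.continuous_exp.comp
        (((continuous_const.sub continuous_id).norm.pow 2).neg.div_const 2)).neg
    · exact (innerSL ℝ).continuous.comp (continuous_const.sub continuous_id)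
  have hasF : HasFDerivAt (fun y => ∫ θ, Real.exp (-‖y - θ‖ ^ 2 / 2) ∂μ) D x := by
    rw [hDdef]
    apply hasFDerivAt_integral_of_dominated_of_fderiv_le
      (F' := fun y θ => (-Real.exp (-‖y - θ‖ ^ 2 / 2)) • innerSL ℝ (y - θ))
      (bound := fun _ => 1) (s := Metric.ball x 1) (Metric.ball_mem_nhds x one_pos)
    · refine Filter.Eventually.of_forall fun y => Continuous.aestronglyMeasurable ?_
      exact Real.continuous_exp.comp
        (((continuous_const.sub continuous_id).norm.pow 2).neg.div_const 2)
    · exact hwdef ▸ int_w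
    · exact contF'.aestronglyMeasurable
    · refine ae_of_all _ fun θ y _ => ?_
      rw [gaussDerivNorm]
      exact aux1 (norm_nonneg _)
    · exact integrable_const 1
    · exact ae_of_all _ fun θ y _ => gaussDeriv θ y
  -- differentiability of the log-density
  have hfx : 0 < c * I := mul_pos hc0 hI0
  have hgx : gaussianMixture μ x = c * I := by
    rw [gaussianMixture, hcdef, hIdef, hwdef]
  have hasG : HasFDerivAt (fun y => gaussianMixture μ y) (c • D) x := by
    have := hasF.const_mul c
    simpa [gaussianMixture, hcdef] using this
  have hasL : HasFDerivAt (fun y => Real.log (gaussianMixture μ y))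
      ((gaussianMixture μ x)⁻¹ • (c • D)) x :=
    hasG.log (by rw [hgx]; exact ne_of_gt hfx)
  rw [hasL.fderiv]
  -- norm computation
  have hnorm : ‖(gaussianMixture μ x)⁻¹ • (c • D)‖ = ‖D‖ / I := by
    rw [norm_smul ((gaussianMixture μ x)⁻¹) (c • D), norm_smul c D, hgx,
      Real.norm_eq_abs, Real.norm_eq_abs, abs_of_pos (inv_pos.2 hfx), abs_of_pos hc0]
    field_simp
  rw [hnorm]
  obtain ⟨A, hAdef⟩ : ∃ A : ℝ, A = ‖x‖ + R + s + 1 := ⟨_, rfl⟩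
  have hA1 : 1 ≤ A := by rw [hAdef]; have := norm_nonneg x; linarith
  have hA0 : 0 ≤ A := by linarith
  -- bound on ‖D‖
  have hg_int : Integrable (fun θ => ‖x - θ‖ * w θ) μ := by
    refine (integrable_const (1:ℝ)).mono'
      (Continuous.aestronglyMeasurable ?_) (ae_of_all _ fun θ => ?_)
    · exact ((continuous_const.sub continuous_id).norm).mul cw
    · rw [Real.norm_eq_abs, abs_of_nonneg (mul_nonneg (norm_nonneg _) (hw_pos θ).le), hwdef]
      exact aux1 (norm_nonneg _)
  have hD1 : ‖D‖ ≤ ∫ θ, ‖x - θ‖ * w θ ∂μ := by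
    rw [hDdef]
    calc ‖∫ θ, (-Real.exp (-‖x - θ‖ ^ 2 / 2)) • innerSL ℝ (x - θ) ∂μ‖
        ≤ ∫ θ, ‖(-Real.exp (-‖x - θ‖ ^ 2 / 2)) • innerSL ℝ (x - θ)‖ ∂μ :=
        norm_integral_le_integral_norm _
      _ = ∫ θ, ‖x - θ‖ * w θ ∂μ := by
        congr 1; funext θ; rw [gaussDerivNorm, hwdef]
  have hpt : ∀ θ, ‖x - θ‖ * w θ ≤ A * w θ + A * Real.exp (-A ^ 2 / 2) := by
    intro θ
    rcases le_or_gt ‖x - θ‖ A with h | h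
    · have h1 : ‖x - θ‖ * w θ ≤ A * w θ :=
        mul_le_mul_of_nonneg_right h (hw_pos θ).le
      have h2 : 0 ≤ A * Real.exp (-A ^ 2 / 2) := mul_nonneg hA0 (Real.exp_pos _).le
      linarith
    · have h1 : ‖x - θ‖ * w θ ≤ A * Real.exp (-A ^ 2 / 2) := by
        rw [hwdef]; exact aux2 hA1 h.le
      have h2 : 0 ≤ A * w θ := mul_nonneg hA0 (hw_pos θ).le
      linarith
  have hD2 : ∫ θ, ‖x - θ‖ * w θ ∂μ ≤ A * I + A * Real.exp (-A ^ 2 / 2) := by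
    have hrhs_int : Integrable (fun θ => A * w θ + A * Real.exp (-A ^ 2 / 2)) μ :=
      (int_w.const_mul A).add (integrable_const _)
    calc ∫ θ, ‖x - θ‖ * w θ ∂μ
        ≤ ∫ θ, (A * w θ + A * Real.exp (-A ^ 2 / 2)) ∂μ :=
        integral_mono hg_int hrhs_int hpt
      _ = A * I + A * Real.exp (-A ^ 2 / 2) := by
        rw [integral_add (int_w.const_mul A) (integrable_const _),
          integral_const_mul, integral_const]
        simp [hIdef]
  -- tail bound
  have htail : A * Real.exp (-A ^ 2 / 2) ≤ A * I := by
    apply mul_le_mul_of_nonneg_left _ hA0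
    have hAB : A = B + (s + 1) := by rw [hAdef, hBdef]; ring
    have hA2B2 : -A ^ 2 / 2 ≤ Real.log τ + -B ^ 2 / 2 := by
      have h1 : A ^ 2 - B ^ 2 ≥ -2 * Real.log τ := by
        have h2 : A ^ 2 - B ^ 2 = 2 * B * (s + 1) + (s + 1) ^ 2 := by rw [hAB]; ring
        nlinarith
      linarith
    calc Real.exp (-A ^ 2 / 2) ≤ Real.exp (Real.log τ + -B ^ 2 / 2) :=
        Real.exp_le_exp.2 hA2B2
      _ = τ * Real.exp (-B ^ 2 / 2) := by rw [Real.exp_add, Real.exp_log hτ.1]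
      _ ≤ I := hlow
  have hDfin : ‖D‖ ≤ 2 * A * I := by
    calc ‖D‖ ≤ A * I + A * Real.exp (-A ^ 2 / 2) := hD1.trans hD2
      _ ≤ A * I + A * I := by linarith
      _ = 2 * A * I := by ring
  rw [div_le_iff₀ hI0]
  calc ‖D‖ ≤ 2 * A * I := hDfin
    _ = (2 * ‖x‖ + 2 * (R + s + 1)) * I := by rw [hAdef]; ring
end

section
/- Let Z be a standard Gaussian vector in ℝ^d and r > 0 be such that P(‖Z‖ ≤ r) ≥ 0.9. Let μ_* be a probability measure on ℝ^d with support S, let f_* be its Gaussian location mixture density, and set D(2r) = {x ∈ ℝ^d : dist(x, S) ≤ 2r}. If f is any Gaussian location mixture density with mixing measure μ and total variation distance TV(f, f_*) ≤ ε, then μ(D(2r)) ≥ 2 - (1+ε)/P(‖Z‖ ≤ r). In particular, if H²(f, f_*) ≤ (1/2)(1 - e^{-1})², then μ(D(2r)) > 0.16. -/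
open MeasureTheory Real

/-- The squared Hellinger distance between two densities on `ℝ^d`. -/
noncomputable def hellingerSq {d : ℕ} (f g : EuclideanSpace ℝ (Fin d) → ℝ) : ℝ :=
  ∫ x, (Real.sqrt (f x) - Real.sqrt (g x)) ^ 2

/-- The standard Gaussian measure on `ℝ^d`. -/
noncomputable def stdGaussian (d : ℕ) : Measure (EuclideanSpace ℝ (Fin d)) :=
  volume.withDensity fun x =>
    ENNReal.ofReal ((2 * π) ^ (-(d : ℝ) / 2) * Real.exp (-‖x‖ ^ 2 / 2))

variable {d : ℕ}

local notation "E" => EuclideanSpace ℝ (Fin d)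

lemma integral_exp_norm : ∫ x : E, Real.exp (-‖x‖ ^ 2 / 2) = (2 * π) ^ ((d : ℝ) / 2) := by
  have h := (EuclideanSpace.volume_preserving_symm_measurableEquiv_toLp (Fin d)).symm
  rw [← h.integral_comp (MeasurableEquiv.measurableEmbedding _)]
  have heq : ∀ y : Fin d → ℝ, Real.exp (-‖(MeasurableEquiv.toLp 2 (Fin d → ℝ)).symm.symm y‖ ^ 2 / 2)
      = ∏ i, Real.exp (-(2⁻¹ : ℝ) * (y i) ^ 2) := by
    intro y
    rw [EuclideanSpace.norm_eq, ← Real.exp_sum]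
    congr 1
    rw [Real.sq_sqrt (by positivity)]
    simp only [MeasurableEquiv.symm_symm, MeasurableEquiv.coe_toLp, PiLp.toLp_apply,
      Real.norm_eq_abs, sq_abs]
    rw [neg_div, Finset.sum_div, neg_eq_iff_eq_neg, ← Finset.sum_neg_distrib]
    exact Finset.sum_congr rfl (by intros; ring)
  simp_rw [heq]
  rw [volume_pi, MeasureTheory.integral_fintype_prod_eq_pow (ι := Fin d) (fun x : ℝ => Real.exp (-(2⁻¹:ℝ) * x ^ 2))]
  rw [integral_gaussian]
  rw [show π / (2⁻¹:ℝ) = 2 * π by ring]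
  rw [Real.sqrt_eq_rpow, Fintype.card_fin, ← Real.rpow_natCast ((2*π) ^ ((1:ℝ)/2)) d,
    ← Real.rpow_mul (by positivity)]
  congr 1
  ring

lemma integrable_exp_norm : Integrable (fun x : E => Real.exp (-‖x‖ ^ 2 / 2)) := by
  have h := (GaussianFourier.integrable_cexp_neg_mul_sq_norm_add (V := E)
    (b := (1/2 : ℂ)) (by norm_num) 0 0).norm
  refine h.congr (Filter.Eventually.of_forall fun v => ?_)
  simp [Complex.norm_exp]
  norm_num
  norm_cast
  push_cast
  ring

lemma c_pos : 0 < (2 * π) ^ (-(d : ℝ) / 2) := Real.rpow_pos_of_pos (by positivity) _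

lemma integral_phi : ∫ x : E, (2 * π) ^ (-(d : ℝ) / 2) * Real.exp (-‖x‖ ^ 2 / 2) = 1 := by
  rw [integral_const_mul, integral_exp_norm, ← Real.rpow_add (by positivity)]
  rw [show -(d:ℝ)/2 + d/2 = 0 by ring, Real.rpow_zero]

lemma integrable_phi : Integrable (fun x : E => (2 * π) ^ (-(d : ℝ) / 2) * Real.exp (-‖x‖ ^ 2 / 2)) :=
  integrable_exp_norm.const_mul _

lemma stdGaussian_apply' {A : Set E} (hA : MeasurableSet A) :
    stdGaussian d A = ∫⁻ x in A, ENNReal.ofReal ((2 * π) ^ (-(d : ℝ) / 2) * Real.exp (-‖x‖ ^ 2 / 2)) :=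
  withDensity_apply _ hA

lemma stdGaussian_univ : stdGaussian d Set.univ = 1 := by
  rw [stdGaussian_apply' MeasurableSet.univ, Measure.restrict_univ,
    ← ofReal_integral_eq_lintegral_ofReal integrable_phi
      (Filter.Eventually.of_forall fun x => by positivity), integral_phi]
  simp

instance : IsProbabilityMeasure (stdGaussian d) := ⟨stdGaussian_univ⟩

lemma lintegral_shift {A : Set E} (hA : MeasurableSet A) (θ : E) :
    ∫⁻ x in A, ENNReal.ofReal ((2 * π) ^ (-(d : ℝ) / 2) * Real.exp (-‖x - θ‖ ^ 2 / 2))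
      = stdGaussian d ((· + θ) ⁻¹' A) := by
  rw [stdGaussian_apply' (hA.preimage (measurable_add_const θ))]
  rw [← lintegral_indicator hA _, ← lintegral_indicator (hA.preimage (measurable_add_const θ)) _]
  rw [← lintegral_add_right_eq_self
    (fun x => Set.indicator A (fun x => ENNReal.ofReal ((2 * π) ^ (-(d : ℝ) / 2) * Real.exp (-‖x - θ‖ ^ 2 / 2))) x) θ]
  congr 1
  funext z
  by_cases hz : z + θ ∈ A
  · rw [Set.indicator_of_mem hz, Set.indicator_of_mem (by exact hz), add_sub_cancel_right]
  · rw [Set.indicator_of_notMem hz, Set.indicator_of_notMem (by exact hz)]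

variable {μ : Measure (EuclideanSpace ℝ (Fin d))} [IsProbabilityMeasure μ]

lemma integrand_integrable (x : E) :
    Integrable (fun θ : E => (2 * π) ^ (-(d : ℝ) / 2) * Real.exp (-‖x - θ‖ ^ 2 / 2)) μ := by
  refine (integrable_const ((2 * π) ^ (-(d : ℝ) / 2))).mono'
    (Continuous.aestronglyMeasurable (by continuity)) (Filter.Eventually.of_forall fun θ => ?_)
  rw [Real.norm_eq_abs, abs_mul, abs_of_nonneg c_pos.le, abs_of_nonneg (Real.exp_nonneg _)]
  nth_rewrite 2 [← mul_one ((2 * π) ^ (-(d : ℝ) / 2))]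
  exact mul_le_mul_of_nonneg_left (Real.exp_le_one_iff.2 (by nlinarith [sq_nonneg ‖x - θ‖])) c_pos.le

lemma gm_nonneg (x : E) : 0 ≤ gaussianMixture μ x := by
  refine mul_nonneg c_pos.le (integral_nonneg fun θ => Real.exp_nonneg _)

lemma gm_eq_lintegral (x : E) : ENNReal.ofReal (gaussianMixture μ x)
    = ∫⁻ θ, ENNReal.ofReal ((2 * π) ^ (-(d : ℝ) / 2) * Real.exp (-‖x - θ‖ ^ 2 / 2)) ∂μ := by
  rw [gaussianMixture, ← integral_const_mul]
  exact ofReal_integral_eq_lintegral_ofReal (integrand_integrable x)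
    (Filter.Eventually.of_forall fun θ => by positivity)

lemma gm_stronglyMeasurable : StronglyMeasurable (gaussianMixture μ) := by
  apply StronglyMeasurable.const_mul
  exact (Continuous.stronglyMeasurable (by continuity :
    Continuous fun p : E × E => Real.exp (-‖p.1 - p.2‖ ^ 2 / 2))).integral_prod_right'

lemma setIntegral_mixture {A : Set E} (hA : MeasurableSet A) :
    ∫ x in A, gaussianMixture μ x = (∫⁻ θ, stdGaussian d ((· + θ) ⁻¹' A) ∂μ).toReal := by
  rw [integral_eq_lintegral_of_nonneg_ae (Filter.Eventually.of_forall fun x => gm_nonneg x)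
    gm_stronglyMeasurable.aestronglyMeasurable.restrict]
  congr 1
  simp_rw [gm_eq_lintegral]
  rw [lintegral_lintegral_swap (Measurable.aemeasurable (by
      exact (Continuous.measurable (by continuity :
        Continuous fun p : E × E => (2 * π) ^ (-(d : ℝ) / 2)
          * Real.exp (-‖p.1 - p.2‖ ^ 2 / 2))).ennreal_ofReal))]
  congr 1
  funext θ
  exact lintegral_shift hA θ

lemma lintegral_mixture {A : Set E} (hA : MeasurableSet A) :
    ∫⁻ x in A, ENNReal.ofReal (gaussianMixture μ x) = ∫⁻ θ, stdGaussian d ((· + θ) ⁻¹' A) ∂μ := by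
  simp_rw [gm_eq_lintegral]
  rw [lintegral_lintegral_swap (Measurable.aemeasurable (by
      exact (Continuous.measurable (by continuity :
        Continuous fun p : E × E => (2 * π) ^ (-(d : ℝ) / 2)
          * Real.exp (-‖p.1 - p.2‖ ^ 2 / 2))).ennreal_ofReal))]
  congr 1
  funext θ
  exact lintegral_shift hA θ

lemma lintegral_mixture_univ : ∫⁻ x, ENNReal.ofReal (gaussianMixture μ x) = 1 := by
  have := lintegral_mixture (μ := μ) MeasurableSet.univ
  rw [Measure.restrict_univ] at this
  simp only [Set.preimage_univ, stdGaussian_univ, lintegral_const, measure_univ, mul_one] at this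
  simpa using this

lemma integrable_mixture : Integrable (gaussianMixture μ) := by
  refine ⟨gm_stronglyMeasurable.aestronglyMeasurable, ?_⟩
  rw [hasFiniteIntegral_iff_ofReal (Filter.Eventually.of_forall fun x => gm_nonneg x),
    lintegral_mixture_univ]
  norm_num

lemma integral_mixture_univ : ∫ x, gaussianMixture μ x = 1 := by
  rw [integral_eq_lintegral_of_nonneg_ae (Filter.Eventually.of_forall fun x => gm_nonneg x)
    gm_stronglyMeasurable.aestronglyMeasurable, lintegral_mixture_univ]
  norm_num

lemma measurableSet_fat (S : Set E) (r : ℝ) : MeasurableSet {x : E | Metric.infDist x S ≤ r} :=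
  measurableSet_le (Metric.continuous_infDist_pt S).measurable measurable_const

lemma bound_star {S : Set E} {r : ℝ} (hsupp : μ Sᶜ = 0) :
    stdGaussian d {z : E | ‖z‖ ≤ r}
      ≤ ∫⁻ θ, stdGaussian d ((· + θ) ⁻¹' {x : E | Metric.infDist x S ≤ r}) ∂μ := by
  have h := lintegral_const (μ := μ) (stdGaussian d {z : E | ‖z‖ ≤ r})
  rw [measure_univ, mul_one] at h
  rw [← h]
  refine lintegral_mono_ae ?_
  have hae : ∀ᵐ θ ∂μ, θ ∈ S := by
    rw [MeasureTheory.ae_iff]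
    exact hsupp
  filter_upwards [hae] with θ hθ
  apply measure_mono
  intro z hz
  simp only [Set.mem_setOf_eq] at hz
  simp only [Set.mem_preimage, Set.mem_setOf_eq]
  refine le_trans ?_ hz
  calc Metric.infDist (z + θ) S ≤ dist (z + θ) θ := Metric.infDist_le_dist_of_mem hθ
  _ = ‖z‖ := by rw [dist_eq_norm, add_sub_cancel_right]

lemma bound_mix {S : Set E} {r : ℝ} (hr : 0 < r) :
    ∫⁻ θ, stdGaussian d ((· + θ) ⁻¹' {x : E | Metric.infDist x S ≤ r}) ∂μ
      ≤ μ {x : E | Metric.infDist x S ≤ 2 * r}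
        + stdGaussian d {z : E | r < ‖z‖} * μ {x : E | Metric.infDist x S ≤ 2 * r}ᶜ := by
  set D := {x : E | Metric.infDist x S ≤ 2 * r} with hD
  have hDm : MeasurableSet D := measurableSet_fat S (2 * r)
  rw [← lintegral_add_compl _ hDm]
  gcongr
  · calc ∫⁻ θ in D, stdGaussian d ((· + θ) ⁻¹' {x : E | Metric.infDist x S ≤ r}) ∂μ
        ≤ ∫⁻ _ in D, 1 ∂μ := setLIntegral_mono measurable_const
          (fun θ _ => prob_le_one)
      _ = μ D := setLIntegral_one D
  · calc ∫⁻ θ in Dᶜ, stdGaussian d ((· + θ) ⁻¹' {x : E | Metric.infDist x S ≤ r}) ∂μ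
        ≤ ∫⁻ _ in Dᶜ, stdGaussian d {z : E | r < ‖z‖} ∂μ := by
          refine setLIntegral_mono measurable_const (fun θ hθ => measure_mono ?_)
          intro z hz
          simp only [Set.mem_preimage, Set.mem_setOf_eq] at hz ⊢
          by_contra hc
          push_neg at hc
          apply hθ
          simp only [hD, Set.mem_setOf_eq]
          calc Metric.infDist θ S ≤ Metric.infDist (z + θ) S + dist θ (z + θ) :=
            Metric.infDist_le_infDist_add_dist
          _ ≤ r + r := by
              refine add_le_add hz ?_
              rw [dist_comm, dist_eq_norm, add_sub_cancel_right]
              exact hc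
          _ = 2 * r := by ring
      _ = stdGaussian d {z : E | r < ‖z‖} * μ Dᶜ := setLIntegral_const _ _

lemma tv_half {f g : E → ℝ} {A : Set E} (hA : MeasurableSet A)
    (hf : Integrable f) (hg : Integrable g) (Hf : ∫ x, f x = 1) (Hg : ∫ x, g x = 1) :
    (∫ x in A, g x) - ∫ x in A, f x ≤ (1 / 2) * ∫ x, |f x - g x| := by
  have h1 : (∫ x in A, f x) + ∫ x in Aᶜ, f x = 1 := by rw [integral_add_compl hA hf, Hf]
  have h2 : (∫ x in A, g x) + ∫ x in Aᶜ, g x = 1 := by rw [integral_add_compl hA hg, Hg]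
  have habs : (∫ x in A, |f x - g x|) + ∫ x in Aᶜ, |f x - g x| = ∫ x, |f x - g x| :=
    integral_add_compl hA (hf.sub hg).abs
  have h3 : (∫ x in A, g x) - ∫ x in A, f x ≤ ∫ x in A, |f x - g x| := by
    rw [← integral_sub hg.integrableOn hf.integrableOn]
    refine integral_mono (hg.integrableOn.sub hf.integrableOn) (hf.sub hg).abs.integrableOn
      fun x => ?_
    rw [abs_sub_comm]
    exact le_abs_self _
  have h4 : (∫ x in Aᶜ, f x) - ∫ x in Aᶜ, g x ≤ ∫ x in Aᶜ, |f x - g x| := by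
    rw [← integral_sub hf.integrableOn hg.integrableOn]
    exact integral_mono (hf.integrableOn.sub hg.integrableOn) (hf.sub hg).abs.integrableOn
      fun x => le_abs_self _
  linarith

lemma tv_le_two_sqrt_hellinger {f g : E → ℝ} (hfm : Measurable f) (hgm : Measurable g)
    (hf : Integrable f) (hg : Integrable g) (hf0 : ∀ x, 0 ≤ f x) (hg0 : ∀ x, 0 ≤ g x)
    (Hf : ∫ x, f x = 1) (Hg : ∫ x, g x = 1) :
    ∫ x, |f x - g x| ≤ 2 * Real.sqrt (hellingerSq f g) := by
  have hsqm : Measurable fun x => Real.sqrt (f x) - Real.sqrt (g x) :=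
    (hfm.sqrt).sub (hgm.sqrt)
  have haddm : Measurable fun x => Real.sqrt (f x) + Real.sqrt (g x) :=
    (hfm.sqrt).add (hgm.sqrt)
  have hint1 : Integrable (fun x => (Real.sqrt (f x) - Real.sqrt (g x)) ^ 2) := by
    refine (hf.add hg).mono' (hsqm.pow_const 2).aestronglyMeasurable
      (Filter.Eventually.of_forall fun x => ?_)
    rw [Real.norm_eq_abs, abs_of_nonneg (sq_nonneg _)]
    simp only [Pi.add_apply]
    nlinarith [Real.sq_sqrt (hf0 x), Real.sq_sqrt (hg0 x), Real.sqrt_nonneg (f x),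
      Real.sqrt_nonneg (g x), sq_nonneg (Real.sqrt (f x) - Real.sqrt (g x)),
      sq_nonneg (Real.sqrt (f x) + Real.sqrt (g x))]
  have hint2 : Integrable (fun x => (Real.sqrt (f x) + Real.sqrt (g x)) ^ 2) := by
    refine ((hf.add hg).const_mul 2).mono' (haddm.pow_const 2).aestronglyMeasurable
      (Filter.Eventually.of_forall fun x => ?_)
    rw [Real.norm_eq_abs, abs_of_nonneg (sq_nonneg _)]
    simp only [Pi.add_apply]
    nlinarith [Real.sq_sqrt (hf0 x), Real.sq_sqrt (hg0 x), Real.sqrt_nonneg (f x),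
      Real.sqrt_nonneg (g x), sq_nonneg (Real.sqrt (f x) - Real.sqrt (g x))]
  have hH0 : 0 ≤ hellingerSq f g := integral_nonneg fun x => sq_nonneg _
  -- pointwise factorization
  have hfact : ∀ x, ENNReal.ofReal |f x - g x|
      = ENNReal.ofReal |Real.sqrt (f x) - Real.sqrt (g x)|
        * ENNReal.ofReal (Real.sqrt (f x) + Real.sqrt (g x)) := by
    intro x
    rw [← ENNReal.ofReal_mul (abs_nonneg _)]
    congr 1
    rw [← abs_of_nonneg (by positivity : (0:ℝ) ≤ Real.sqrt (f x) + Real.sqrt (g x)), ← abs_mul]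
    congr 1
    nlinarith [Real.sq_sqrt (hf0 x), Real.sq_sqrt (hg0 x)]
  have hCS := ENNReal.lintegral_mul_le_Lp_mul_Lq (volume : Measure E)
    (⟨by norm_num, by norm_num, by norm_num⟩ : Real.HolderConjugate 2 2)
    (Measurable.aemeasurable (hsqm.abs.ennreal_ofReal))
    (Measurable.aemeasurable (haddm.ennreal_ofReal))
  have hA2 : (∫⁻ x, (ENNReal.ofReal |Real.sqrt (f x) - Real.sqrt (g x)|) ^ (2:ℝ))
      = ENNReal.ofReal (hellingerSq f g) := by
    have hpt : ∀ x, (ENNReal.ofReal |Real.sqrt (f x) - Real.sqrt (g x)|) ^ (2:ℝ)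
        = ENNReal.ofReal ((Real.sqrt (f x) - Real.sqrt (g x)) ^ 2) := by
      intro x
      rw [ENNReal.ofReal_rpow_of_nonneg (abs_nonneg _) (by norm_num)]
      congr 1
      rw [show ((2:ℝ)) = ((2:ℕ):ℝ) by norm_num, Real.rpow_natCast, sq_abs]
    simp_rw [hpt]
    rw [← ofReal_integral_eq_lintegral_ofReal hint1
      (Filter.Eventually.of_forall fun x => sq_nonneg _)]
    rfl
  have hB2 : (∫⁻ x, (ENNReal.ofReal (Real.sqrt (f x) + Real.sqrt (g x))) ^ (2:ℝ))
      ≤ ENNReal.ofReal 4 := by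
    have hpt : ∀ x, (ENNReal.ofReal (Real.sqrt (f x) + Real.sqrt (g x))) ^ (2:ℝ)
        = ENNReal.ofReal ((Real.sqrt (f x) + Real.sqrt (g x)) ^ 2) := by
      intro x
      rw [ENNReal.ofReal_rpow_of_nonneg (by positivity) (by norm_num)]
      congr 1
      rw [show ((2:ℝ)) = ((2:ℕ):ℝ) by norm_num, Real.rpow_natCast]
    simp_rw [hpt]
    rw [← ofReal_integral_eq_lintegral_ofReal hint2
      (Filter.Eventually.of_forall fun x => sq_nonneg _)]
    apply ENNReal.ofReal_le_ofReal
    calc ∫ x, (Real.sqrt (f x) + Real.sqrt (g x)) ^ 2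
        ≤ ∫ x, 2 * (f x + g x) := by
          refine integral_mono hint2 (((hf.add hg).const_mul 2).congr ?_) fun x => ?_
          · exact Filter.Eventually.of_forall fun x => by simp [Pi.add_apply]
          · nlinarith [Real.sq_sqrt (hf0 x), Real.sq_sqrt (hg0 x),
              sq_nonneg (Real.sqrt (f x) - Real.sqrt (g x))]
      _ = 4 := by
          rw [integral_const_mul, integral_add hf hg, Hf, Hg]; norm_num
  have hle : (∫⁻ x, ENNReal.ofReal |f x - g x|)
      ≤ ENNReal.ofReal (Real.sqrt (hellingerSq f g) * 2) := by
    calc (∫⁻ x, ENNReal.ofReal |f x - g x|)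
        = ∫⁻ x, (fun x => ENNReal.ofReal |Real.sqrt (f x) - Real.sqrt (g x)|)
            x * (fun x => ENNReal.ofReal (Real.sqrt (f x) + Real.sqrt (g x))) x := by
          simp_rw [hfact]
      _ ≤ (∫⁻ x, (ENNReal.ofReal |Real.sqrt (f x) - Real.sqrt (g x)|) ^ (2:ℝ)) ^ (1/(2:ℝ))
          * (∫⁻ x, (ENNReal.ofReal (Real.sqrt (f x) + Real.sqrt (g x))) ^ (2:ℝ)) ^ (1/(2:ℝ)) :=
          hCS
      _ ≤ (ENNReal.ofReal (hellingerSq f g)) ^ (1/(2:ℝ))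
          * (ENNReal.ofReal 4) ^ (1/(2:ℝ)) := by
          rw [hA2]
          gcongr
      _ = ENNReal.ofReal (Real.sqrt (hellingerSq f g) * 2) := by
          rw [ENNReal.ofReal_rpow_of_nonneg hH0 (by norm_num),
            ENNReal.ofReal_rpow_of_nonneg (by norm_num : (0:ℝ) ≤ 4) (by norm_num),
            ← ENNReal.ofReal_mul (by positivity)]
          congr 1
          rw [← Real.sqrt_eq_rpow, ← Real.sqrt_eq_rpow,
            show (4:ℝ) = 2 ^ 2 by norm_num, Real.sqrt_sq (by norm_num)]
  have heq : ∫ x, |f x - g x| = (∫⁻ x, ENNReal.ofReal |f x - g x|).toReal :=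
    integral_eq_lintegral_of_nonneg_ae (Filter.Eventually.of_forall fun x => abs_nonneg _)
      (hfm.sub hgm).abs.aestronglyMeasurable
  rw [heq]
  calc (∫⁻ x, ENNReal.ofReal |f x - g x|).toReal
      ≤ (ENNReal.ofReal (Real.sqrt (hellingerSq f g) * 2)).toReal :=
        ENNReal.toReal_mono ENNReal.ofReal_ne_top hle
    _ = Real.sqrt (hellingerSq f g) * 2 := ENNReal.toReal_ofReal (by positivity)
    _ = 2 * Real.sqrt (hellingerSq f g) := mul_comm _ _

lemma part1 {S : Set E} {r : ℝ} (hr : 0 < r) {μstar ν : Measure (EuclideanSpace ℝ (Fin d))}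
    [IsProbabilityMeasure μstar] [IsProbabilityMeasure ν]
    (h9 : (0.9 : ℝ) ≤ (stdGaussian d {z : E | ‖z‖ ≤ r}).toReal)
    (hsupp : μstar Sᶜ = 0) {ε : ℝ} (hε : 0 ≤ ε)
    (hTV : (1 / 2 : ℝ) * ∫ x, |gaussianMixture ν x - gaussianMixture μstar x| ≤ ε) :
    2 - (1 + ε) / (stdGaussian d {z : E | ‖z‖ ≤ r}).toReal
      ≤ (ν {x : E | Metric.infDist x S ≤ 2 * r}).toReal := by
  set p : ℝ := (stdGaussian d {z : E | ‖z‖ ≤ r}).toReal with hp_def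
  set A : Set E := {x : E | Metric.infDist x S ≤ r} with hA_def
  have hA : MeasurableSet A := measurableSet_fat S r
  set D : Set E := {x : E | Metric.infDist x S ≤ 2 * r} with hD_def
  have hD : MeasurableSet D := measurableSet_fat S (2 * r)
  set m : ℝ := (ν D).toReal with hm_def
  have hball : MeasurableSet {z : E | ‖z‖ ≤ r} :=
    measurableSet_le continuous_norm.measurable measurable_const
  -- the lintegrals are finite
  have hLs_le : (∫⁻ θ, stdGaussian d ((· + θ) ⁻¹' A) ∂μstar) ≤ 1 := by
    calc (∫⁻ θ, stdGaussian d ((· + θ) ⁻¹' A) ∂μstar) ≤ ∫⁻ _, 1 ∂μstar :=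
      lintegral_mono fun θ => prob_le_one
    _ = 1 := by simp
  have hL_le : (∫⁻ θ, stdGaussian d ((· + θ) ⁻¹' A) ∂ν) ≤ 1 := by
    calc (∫⁻ θ, stdGaussian d ((· + θ) ⁻¹' A) ∂ν) ≤ ∫⁻ _, 1 ∂ν :=
      lintegral_mono fun θ => prob_le_one
    _ = 1 := by simp
  have hLs_ne : (∫⁻ θ, stdGaussian d ((· + θ) ⁻¹' A) ∂μstar) ≠ ⊤ :=
    (lt_of_le_of_lt hLs_le ENNReal.one_lt_top).ne
  have hL_ne : (∫⁻ θ, stdGaussian d ((· + θ) ⁻¹' A) ∂ν) ≠ ⊤ :=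
    (lt_of_le_of_lt hL_le ENNReal.one_lt_top).ne
  -- star bound
  have h1 : p ≤ ∫ x in A, gaussianMixture μstar x := by
    rw [setIntegral_mixture hA]
    exact ENNReal.toReal_mono hLs_ne (bound_star hsupp)
  -- mixture upper bound
  have hq : (stdGaussian d {z : E | r < ‖z‖}).toReal = 1 - p := by
    have hcompl : {z : E | r < ‖z‖} = {z : E | ‖z‖ ≤ r}ᶜ := by
      ext z; simp [not_le]
    have := measure_add_measure_compl (μ := stdGaussian d) hball
    rw [hcompl]
    have h2 := congrArg ENNReal.toReal this
    rw [ENNReal.toReal_add (measure_ne_top _ _) (measure_ne_top _ _)] at h2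
    simp only [measure_univ, ENNReal.toReal_one] at h2
    linarith
  have hDc : (ν Dᶜ).toReal = 1 - m := by
    have := measure_add_measure_compl (μ := ν) hD
    have h2 := congrArg ENNReal.toReal this
    rw [ENNReal.toReal_add (measure_ne_top _ _) (measure_ne_top _ _)] at h2
    simp only [measure_univ, ENNReal.toReal_one] at h2
    linarith
  have h2 : ∫ x in A, gaussianMixture ν x ≤ m + (1 - p) * (1 - m) := by
    rw [setIntegral_mixture hA]
    calc (∫⁻ θ, stdGaussian d ((· + θ) ⁻¹' A) ∂ν).toReal
        ≤ (ν D + stdGaussian d {z : E | r < ‖z‖} * ν Dᶜ).toReal := by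
          refine ENNReal.toReal_mono ?_ (bound_mix hr)
          exact (ENNReal.add_ne_top.2 ⟨measure_ne_top _ _,
            ENNReal.mul_ne_top (measure_ne_top _ _) (measure_ne_top _ _)⟩)
      _ = m + (1 - p) * (1 - m) := by
          rw [ENNReal.toReal_add (measure_ne_top _ _)
            (ENNReal.mul_ne_top (measure_ne_top _ _) (measure_ne_top _ _)),
            ENNReal.toReal_mul, hq, hDc]
  -- TV bound
  have h3 : (∫ x in A, gaussianMixture μstar x) - ∫ x in A, gaussianMixture ν x ≤ ε :=
    le_trans (tv_half hA integrable_mixture integrable_mixture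
      integral_mixture_univ integral_mixture_univ) hTV
  have hp : (0:ℝ) < p := lt_of_lt_of_le (by norm_num) h9
  have hkey : (2 - m) * p ≤ 1 + ε := by nlinarith
  have h4 : 2 - m ≤ (1 + ε) / p := (le_div_iff₀ hp).2 hkey
  linarith

/-- If a Gaussian mixture `f` is close in total variation (resp. squared Hellinger
distance) to `f⋆`, whose mixing measure is supported in `S`, then the mixing measure of
`f` must place mass at least `2 - (1+ε)/P(‖Z‖ ≤ r)` (resp. more than `0.16`) on the
`2r`-fattening of `S`, where `P(‖Z‖ ≤ r) ≥ 0.9` for a standard Gaussian `Z`. -/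
theorem mixing_measure_mass_lower_bound {d : ℕ} (r : ℝ) (hr : 0 < r)
    (h9 : (0.9 : ℝ) ≤ (stdGaussian d {z | ‖z‖ ≤ r}).toReal)
    (S : Set (EuclideanSpace ℝ (Fin d)))
    (μstar : Measure (EuclideanSpace ℝ (Fin d))) [IsProbabilityMeasure μstar]
    (hsupp : μstar Sᶜ = 0)
    (μ : Measure (EuclideanSpace ℝ (Fin d))) [IsProbabilityMeasure μ] :
    (∀ ε : ℝ, 0 ≤ ε →
      (1 / 2 : ℝ) * (∫ x, |gaussianMixture μ x - gaussianMixture μstar x|) ≤ ε →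
      2 - (1 + ε) / (stdGaussian d {z | ‖z‖ ≤ r}).toReal
        ≤ (μ {x | Metric.infDist x S ≤ 2 * r}).toReal)
    ∧ (hellingerSq (gaussianMixture μ) (gaussianMixture μstar)
          ≤ (1 / 2 : ℝ) * (1 - Real.exp (-1)) ^ 2 →
        (0.16 : ℝ) < (μ {x | Metric.infDist x S ≤ 2 * r}).toReal) := by
  constructor
  · intro ε hε hTV
    exact part1 hr h9 hsupp hε hTV
  · intro hH
    set f := gaussianMixture μ with hf_def
    set g := gaussianMixture μstar with hg_def
    set ε : ℝ := (1 / 2 : ℝ) * ∫ x, |f x - g x| with hε_def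
    have hε0 : 0 ≤ ε := mul_nonneg (by norm_num) (integral_nonneg fun x => abs_nonneg _)
    have h2H : ∫ x, |f x - g x| ≤ 2 * Real.sqrt (hellingerSq f g) :=
      tv_le_two_sqrt_hellinger gm_stronglyMeasurable.measurable
        gm_stronglyMeasurable.measurable integrable_mixture integrable_mixture
        (fun x => gm_nonneg x) (fun x => gm_nonneg x)
        integral_mixture_univ integral_mixture_univ
    have hexp1 : Real.exp 1 < 2.719 := lt_trans Real.exp_one_lt_d9 (by norm_num)
    have hexplo : (2.719:ℝ)⁻¹ < Real.exp (-1) := by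
      rw [Real.exp_neg]
      exact inv_strictAnti₀ (Real.exp_pos 1) hexp1
    have hexphi : Real.exp (-1) < 1 := Real.exp_lt_one_iff.2 (by norm_num)
    have hHle : Real.sqrt (hellingerSq f g) ≤ 0.45 := by
      calc Real.sqrt (hellingerSq f g) ≤ Real.sqrt 0.2025 := by
            refine Real.sqrt_le_sqrt ?_
            nlinarith
        _ = 0.45 := by
            rw [show (0.2025:ℝ) = 0.45 ^ 2 by norm_num, Real.sqrt_sq (by norm_num)]
    have hεle : ε ≤ 0.45 := by
      rw [hε_def]; nlinarith
    have hpart := part1 (d := d) hr h9 hsupp hε0 (le_refl ε)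
    have hp : (0.9:ℝ) ≤ (stdGaussian d {z | ‖z‖ ≤ r}).toReal := h9
    have hdiv : (1 + ε) / (stdGaussian d {z : EuclideanSpace ℝ (Fin d) | ‖z‖ ≤ r}).toReal
        ≤ 1.45 / 0.9 :=
      div_le_div₀ (by norm_num) (by linarith) (by norm_num) hp
    have : (0.16:ℝ) < 2 - 1.45 / 0.9 := by norm_num
    calc (0.16:ℝ) < 2 - 1.45 / 0.9 := this
      _ ≤ 2 - (1 + ε) / (stdGaussian d {z | ‖z‖ ≤ r}).toReal := by linarith
      _ ≤ (μ {x | Metric.infDist x S ≤ 2 * r}).toReal := hpart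
end
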